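/- arXiv:2007.14566 — 5 statements merged into one kernel-verified Lean document; each statement's English description precedes it below -/
import Mathlib

section
/- Continuity of the Helstrom limit (Lemma 1): Let m ≥ 1 and let (ρ_n)_{n=0}^{m−1} and (ρ'_n)_{n=0}^{m−1} be density matrices on ℂ^N such that ‖ρ_n − ρ'_n‖₁ ≤ δ_n for every n, and let (p_n)_{n=0}^{m−1} be prior probabilities. Then P_H({ρ'_n, p_n}) ≥ P_H({ρ_n, p_n}) − (1/2)·Σ_{n=0}^{m−1} p_n·δ_n. -/
open Matrix BigOperators Finset ComplexOrder

noncomputable section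

/-- A density matrix: positive semidefinite with unit trace. -/
def IsDensityMatrix {ι : Type*} [Fintype ι] (ρ : Matrix ι ι ℂ) : Prop :=
  ρ.PosSemidef ∧ ρ.trace = 1

/-- The Helstrom minimum error probability for discriminating the states `ρ n`
with prior probabilities `p n`, optimized over all POVMs. -/
def helstrom {ι : Type*} [Fintype ι] [DecidableEq ι] {m : ℕ}
    (ρ : Fin m → Matrix ι ι ℂ) (p : Fin m → ℝ) : ℝ :=
  1 - sSup { x : ℝ | ∃ M : Fin m → Matrix ι ι ℂ,
      (∀ n, (M n).PosSemidef) ∧ (∑ n, M n) = 1 ∧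
      x = ∑ n, p n * ((M n * ρ n).trace).re }

open Classical in
/-- The positive semidefinite square root (junk value `0` off the PSD cone). -/
def psdSqrt {ι : Type*} [Fintype ι] [DecidableEq ι] (A : Matrix ι ι ℂ) : Matrix ι ι ℂ :=
  if h : A.PosSemidef then
    (h.1.eigenvectorUnitary : Matrix ι ι ℂ) * diagonal ((↑) ∘ (√·) ∘ h.1.eigenvalues) *
      (star h.1.eigenvectorUnitary : Matrix ι ι ℂ) else 0

/-- The trace norm `‖A‖₁ = tr √(Aᴴ A)`. -/
def traceNorm {ι : Type*} [Fintype ι] [DecidableEq ι] (A : Matrix ι ι ℂ) : ℝ :=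
  ((psdSqrt (Aᴴ * A)).trace).re

namespace HelstromAux

variable {ι : Type*} [Fintype ι] [DecidableEq ι]

lemma diag_nonneg' {C : Matrix ι ι ℂ} (hC : C.PosSemidef) (i : ι) : 0 ≤ C i i := by
  exact hC.diag_nonneg

lemma trace_formula (A M : Matrix ι ι ℂ) (hA : A.IsHermitian) :
    (M * A).trace = ∑ i, ((star (hA.eigenvectorUnitary : Matrix ι ι ℂ) * M *
      (hA.eigenvectorUnitary : Matrix ι ι ℂ)) i i) * (hA.eigenvalues i : ℂ) := by
  set V : Matrix ι ι ℂ := (hA.eigenvectorUnitary : Matrix ι ι ℂ) with hV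
  set D : Matrix ι ι ℂ := Matrix.diagonal (RCLike.ofReal ∘ hA.eigenvalues) with hD
  calc (M * A).trace = ((M * V * D) * star V).trace := by
        conv_lhs => rw [hA.spectral_theorem, Unitary.conjStarAlgAut_apply]
        rw [← mul_assoc, ← mul_assoc]
      _ = ((star V * M * V) * D).trace := by
        rw [Matrix.trace_mul_comm, ← mul_assoc, ← mul_assoc]
      _ = ∑ i, ((star V * M * V) i i) * (hA.eigenvalues i : ℂ) := by
        simp [Matrix.trace, Matrix.diag, hD, Matrix.mul_diagonal, Function.comp]

lemma trace_eq_sum_eigs (A : Matrix ι ι ℂ) (hA : A.IsHermitian) :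
    A.trace = ∑ i, (hA.eigenvalues i : ℂ) := by
  have h := trace_formula A 1 hA
  rw [one_mul] at h
  rw [h]
  congr 1; funext i
  have h1 : (star (hA.eigenvectorUnitary : Matrix ι ι ℂ) * 1 *
      (hA.eigenvectorUnitary : Matrix ι ι ℂ)) = 1 := by
    rw [mul_one, Unitary.coe_star_mul_self]
  rw [h1, Matrix.one_apply_eq, one_mul]

lemma traceNorm_herm (A : Matrix ι ι ℂ) (hA : A.IsHermitian) :
    traceNorm A = ∑ i, |hA.eigenvalues i| := by
  set V : Matrix ι ι ℂ := (hA.eigenvectorUnitary : Matrix ι ι ℂ) with hVdef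
  have hVV : star V * V = 1 := Unitary.coe_star_mul_self hA.eigenvectorUnitary
  set D : Matrix ι ι ℂ := Matrix.diagonal (RCLike.ofReal ∘ hA.eigenvalues) with hD
  set D' : Matrix ι ι ℂ := Matrix.diagonal (fun i => ((|hA.eigenvalues i| : ℝ) : ℂ)) with hD'
  set B : Matrix ι ι ℂ := V * D' * star V with hBdef
  have hDpsd : D'.PosSemidef := Matrix.posSemidef_diagonal_iff.mpr fun i => by
    rw [Complex.zero_le_real]; exact abs_nonneg _
  have hB : B.PosSemidef := by
    have := hDpsd.mul_mul_conjTranspose_same V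
    rwa [← Matrix.star_eq_conjTranspose] at this
  have assoc5 : ∀ X Y : Matrix ι ι ℂ,
      (V * X * star V) * (V * Y * star V) = V * (X * (star V * V) * Y) * star V := by
    intro X Y
    simp only [Matrix.mul_assoc]
  have hsq : B ^ 2 = Aᴴ * A := by
    rw [hA.eq]
    conv_rhs => rw [hA.spectral_theorem, Unitary.conjStarAlgAut_apply, ← hD, ← hVdef]
    rw [hBdef, pow_two, assoc5, assoc5, hVV, mul_one, mul_one]
    have hDD : D' * D' = D * D := by
      rw [hD, hD', Matrix.diagonal_mul_diagonal, Matrix.diagonal_mul_diagonal]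
      refine congrArg Matrix.diagonal (funext fun i => ?_)
      simp only [Function.comp_apply]
      norm_cast
      exact congrArg Complex.ofReal (abs_mul_abs_self (hA.eigenvalues i))
    rw [hDD]
  have hPSD := Matrix.posSemidef_conjTranspose_mul_self A
  have hBsqrt : psdSqrt (Aᴴ * A) = B := by
    rw [psdSqrt, dif_pos hPSD]
    have e1 := hPSD.1.cfc_eq Real.sqrt
    rw [Matrix.IsHermitian.cfc, Unitary.conjStarAlgAut_apply] at e1
    rw [show ((↑) ∘ (√·) ∘ hPSD.1.eigenvalues : ι → ℂ) =
      RCLike.ofReal ∘ Real.sqrt ∘ hPSD.1.eigenvalues from rfl, ← e1]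
    open MatrixOrder in
    rw [← cfcₙ_eq_cfc (hf := Real.continuous_sqrt.continuousOn) (hf0 := Real.sqrt_zero),
      ← CFC.sqrt_eq_real_sqrt _ hPSD.nonneg]
    open MatrixOrder in
    exact CFC.sqrt_unique ((pow_two B).symm.trans hsq) hB.nonneg
  rw [traceNorm, hBsqrt, hBdef,
    Matrix.trace_mul_comm, ← Matrix.mul_assoc, hVV, one_mul]
  rw [Matrix.trace_diagonal]
  simp

lemma traceNorm_neg (A : Matrix ι ι ℂ) : traceNorm (-A) = traceNorm A := by
  unfold traceNorm
  rw [Matrix.conjTranspose_neg, Matrix.neg_mul, Matrix.mul_neg, neg_neg]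

/-- diagonal entries of `Vᴴ M V` for `M` with `0 ≤ M ≤ 1` lie in `[0,1]`. -/
lemma conj_diag_bounds {M : Matrix ι ι ℂ} (hM : M.PosSemidef) (hM1 : ((1 : Matrix ι ι ℂ) - M).PosSemidef)
    (V : Matrix ι ι ℂ) (hVV : star V * V = 1) (i : ι) :
    0 ≤ ((star V * M * V) i i).re ∧ ((star V * M * V) i i).re ≤ 1 ∧
      ((star V * M * V) i i).im = 0 := by
  have hC : (star V * M * V).PosSemidef := by
    have := hM.conjTranspose_mul_mul_same V
    rwa [← Matrix.star_eq_conjTranspose] at this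
  have hC1 : ((1 : Matrix ι ι ℂ) - star V * M * V).PosSemidef := by
    have := hM1.conjTranspose_mul_mul_same V
    rw [← Matrix.star_eq_conjTranspose, Matrix.mul_sub, Matrix.sub_mul, mul_one, hVV] at this
    exact this
  have h1 := diag_nonneg' hC i
  have h2 := diag_nonneg' hC1 i
  rw [Matrix.sub_apply, Matrix.one_apply_eq] at h2
  rw [Complex.nonneg_iff] at h1
  rw [Complex.nonneg_iff, Complex.sub_re, Complex.sub_im, Complex.one_re, Complex.one_im] at h2
  refine ⟨h1.1, by linarith [h2.1], h1.2.symm⟩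

lemma trace_re_formula (A M : Matrix ι ι ℂ) (hA : A.IsHermitian) :
    ((M * A).trace).re = ∑ i, ((star (hA.eigenvectorUnitary : Matrix ι ι ℂ) * M *
      (hA.eigenvectorUnitary : Matrix ι ι ℂ)) i i).re * hA.eigenvalues i := by
  rw [trace_formula A M hA, Complex.re_sum]
  refine Finset.sum_congr rfl fun i _ => ?_
  rw [Complex.mul_re, Complex.ofReal_re, Complex.ofReal_im, mul_zero, sub_zero]

/-- Key bound: for `0 ≤ M ≤ 1` and traceless Hermitian `A`,
`Re tr(M A) ≤ ½‖A‖₁`. -/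
lemma key_bound {A M : Matrix ι ι ℂ} (hA : A.IsHermitian) (htr : A.trace = 0)
    (hM : M.PosSemidef) (hM1 : ((1 : Matrix ι ι ℂ) - M).PosSemidef) :
    ((M * A).trace).re ≤ (1/2) * traceNorm A := by
  have hVV : star (hA.eigenvectorUnitary : Matrix ι ι ℂ) * (hA.eigenvectorUnitary : Matrix ι ι ℂ) = 1 :=
    Unitary.coe_star_mul_self hA.eigenvectorUnitary
  have hsum0 : ∑ i, hA.eigenvalues i = 0 := by
    have h := trace_eq_sum_eigs A hA
    rw [htr] at h
    have := congrArg Complex.re h.symm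
    simpa [Complex.re_sum] using this
  rw [trace_re_formula A M hA, traceNorm_herm A hA]
  have hstep : ∀ i : ι, ((star (hA.eigenvectorUnitary : Matrix ι ι ℂ) * M *
      (hA.eigenvectorUnitary : Matrix ι ι ℂ)) i i).re * hA.eigenvalues i
      ≤ max (hA.eigenvalues i) 0 := by
    intro i
    obtain ⟨h0, h1, _⟩ := conj_diag_bounds hM hM1 _ hVV i
    rcases le_or_gt 0 (hA.eigenvalues i) with h | h
    · calc _ ≤ 1 * hA.eigenvalues i := by nlinarith
        _ ≤ max (hA.eigenvalues i) 0 := by rw [one_mul]; exact le_max_left _ _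
    · calc _ ≤ 0 := by nlinarith
        _ ≤ max (hA.eigenvalues i) 0 := le_max_right _ _
  calc ∑ i, _ ≤ ∑ i, max (hA.eigenvalues i) 0 := Finset.sum_le_sum fun i _ => hstep i
    _ = (1/2) * ∑ i, (|hA.eigenvalues i| + hA.eigenvalues i) := by
        rw [Finset.mul_sum]
        refine Finset.sum_congr rfl fun i _ => ?_
        rcases le_or_gt 0 (hA.eigenvalues i) with h | h
        · rw [max_eq_left h, abs_of_nonneg h]; ring
        · rw [max_eq_right h.le, abs_of_neg h]; ring
    _ = (1/2) * ∑ i, |hA.eigenvalues i| := by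
        rw [Finset.sum_add_distrib, hsum0, add_zero]

/-- For `0 ≤ M ≤ 1` and `ρ` a density matrix, `Re tr(M ρ) ≤ 1`. -/
lemma trace_le_one {ρ M : Matrix ι ι ℂ} (hρ : IsDensityMatrix ρ)
    (hM : M.PosSemidef) (hM1 : ((1 : Matrix ι ι ℂ) - M).PosSemidef) :
    ((M * ρ).trace).re ≤ 1 := by
  have hA : ρ.IsHermitian := hρ.1.1
  have hVV : star (hA.eigenvectorUnitary : Matrix ι ι ℂ) * (hA.eigenvectorUnitary : Matrix ι ι ℂ) = 1 :=
    Unitary.coe_star_mul_self hA.eigenvectorUnitary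
  have hsum1 : ∑ i, hA.eigenvalues i = 1 := by
    have h := trace_eq_sum_eigs ρ hA
    rw [hρ.2] at h
    have := congrArg Complex.re h.symm
    simpa [Complex.re_sum] using this
  rw [trace_re_formula ρ M hA]
  calc ∑ i, _ ≤ ∑ i, hA.eigenvalues i := by
        refine Finset.sum_le_sum fun i _ => ?_
        obtain ⟨h0, h1, _⟩ := conj_diag_bounds hM hM1 _ hVV i
        have hev : 0 ≤ hA.eigenvalues i := hρ.1.eigenvalues_nonneg i
        nlinarith
    _ = 1 := hsum1

lemma one_sub_psd {m : ℕ} (M : Fin m → Matrix ι ι ℂ) (hpsd : ∀ n, (M n).PosSemidef)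
    (hsum : (∑ n, M n) = 1) (n : Fin m) : ((1 : Matrix ι ι ℂ) - M n).PosSemidef := by
  have h : (1 : Matrix ι ι ℂ) - M n = ∑ k ∈ Finset.univ.erase n, M k := by
    rw [Finset.sum_erase_eq_sub (Finset.mem_univ n), hsum]
  rw [h]
  exact Finset.sum_induction M Matrix.PosSemidef (fun a b ha hb => ha.add hb)
    Matrix.PosSemidef.zero (fun k _ => hpsd k)

end HelstromAux

open HelstromAux in
/-- Continuity of the Helstrom limit (Lemma 1). -/
theorem helstrom_continuity {N m : ℕ} (hm : 1 ≤ m)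
    (ρ ρ' : Fin m → Matrix (Fin N) (Fin N) ℂ) (δ : Fin m → ℝ) (p : Fin m → ℝ)
    (hρ : ∀ n, IsDensityMatrix (ρ n)) (hρ' : ∀ n, IsDensityMatrix (ρ' n))
    (hδ : ∀ n, traceNorm (ρ n - ρ' n) ≤ δ n)
    (hp : ∀ n, 0 ≤ p n) (hpsum : ∑ n, p n = 1) :
    helstrom ρ' p ≥ helstrom ρ p - (1/2) * ∑ n, p n * δ n := by
  classical
  set S : Set ℝ := { x : ℝ | ∃ M : Fin m → Matrix (Fin N) (Fin N) ℂ,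
      (∀ n, (M n).PosSemidef) ∧ (∑ n, M n) = 1 ∧
      x = ∑ n, p n * ((M n * ρ n).trace).re } with hS
  set S' : Set ℝ := { x : ℝ | ∃ M : Fin m → Matrix (Fin N) (Fin N) ℂ,
      (∀ n, (M n).PosSemidef) ∧ (∑ n, M n) = 1 ∧
      x = ∑ n, p n * ((M n * ρ' n).trace).re } with hS'
  set c : ℝ := (1/2) * ∑ n, p n * δ n with hc
  -- nonnegativity of c
  have hδ0 : ∀ n, 0 ≤ δ n := by
    intro n
    refine le_trans ?_ (hδ n)
    rw [traceNorm_herm _ ((hρ n).1.1.sub (hρ' n).1.1)]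
    exact Finset.sum_nonneg fun i _ => abs_nonneg _
  have hc0 : 0 ≤ c := by
    rw [hc]
    refine mul_nonneg (by norm_num) (Finset.sum_nonneg fun n _ => mul_nonneg (hp n) (hδ0 n))
  -- bounded above
  have hbddS : BddAbove S := by
    refine ⟨1, fun x hx => ?_⟩
    obtain ⟨M, hpsd, hsum, rfl⟩ := hx
    calc ∑ n, p n * ((M n * ρ n).trace).re
        ≤ ∑ n, p n * 1 := Finset.sum_le_sum fun n _ => by
          exact mul_le_mul_of_nonneg_left
            (trace_le_one (hρ n) (hpsd n) (one_sub_psd M hpsd hsum n)) (hp n)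
      _ = 1 := by simp [hpsum]
  -- a canonical POVM element
  set z : Fin m := ⟨0, hm⟩ with hz
  set M₀ : Fin m → Matrix (Fin N) (Fin N) ℂ := fun n => if n = z then 1 else 0 with hM₀
  have hM₀psd : ∀ n, (M₀ n).PosSemidef := by
    intro n; rw [hM₀]; dsimp only
    split
    · exact Matrix.PosSemidef.one
    · exact Matrix.PosSemidef.zero
  have hM₀sum : (∑ n, M₀ n) = 1 := by
    rw [hM₀]; simp
  have hx₀ : (∑ n, p n * ((M₀ n * ρ n).trace).re) ∈ S := ⟨M₀, hM₀psd, hM₀sum, rfl⟩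
  have hx₀nonneg : 0 ≤ ∑ n, p n * ((M₀ n * ρ n).trace).re := by
    refine Finset.sum_nonneg fun n _ => mul_nonneg (hp n) ?_
    rw [hM₀]; dsimp only
    split
    · rw [one_mul, (hρ n).2]; norm_num
    · simp
  have hSup0 : 0 ≤ sSup S := le_trans hx₀nonneg (le_csSup hbddS hx₀)
  -- main estimate
  have hmain : sSup S' ≤ sSup S + c := by
    refine Real.sSup_le ?_ (by linarith)
    rintro x ⟨M, hpsd, hsum, rfl⟩
    have hyS : (∑ n, p n * ((M n * ρ n).trace).re) ∈ S := ⟨M, hpsd, hsum, rfl⟩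
    have hy : (∑ n, p n * ((M n * ρ n).trace).re) ≤ sSup S := le_csSup hbddS hyS
    have hterm : ∀ n, p n * ((M n * ρ' n).trace).re
        ≤ p n * ((M n * ρ n).trace).re + p n * ((1/2) * δ n) := by
      intro n
      have hA : (ρ' n - ρ n).IsHermitian := (hρ' n).1.1.sub (hρ n).1.1
      have htr0 : (ρ' n - ρ n).trace = 0 := by
        rw [Matrix.trace_sub, (hρ' n).2, (hρ n).2, sub_self]
      have hkey := key_bound hA htr0 (hpsd n) (one_sub_psd M hpsd hsum n)
      have htn : traceNorm (ρ' n - ρ n) ≤ δ n := by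
        rw [show ρ' n - ρ n = -(ρ n - ρ' n) from (neg_sub _ _).symm, traceNorm_neg]
        exact hδ n
      have hsplit : ((M n * ρ' n).trace).re
          = ((M n * ρ n).trace).re + ((M n * (ρ' n - ρ n)).trace).re := by
        rw [Matrix.mul_sub, Matrix.trace_sub, Complex.sub_re]; ring
      have h2 : ((M n * (ρ' n - ρ n)).trace).re ≤ (1/2) * δ n := by
        calc ((M n * (ρ' n - ρ n)).trace).re ≤ (1/2) * traceNorm (ρ' n - ρ n) := hkey
          _ ≤ (1/2) * δ n := by linarith
      have := mul_le_mul_of_nonneg_left h2 (hp n)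
      rw [hsplit]; nlinarith [hp n]
    calc ∑ n, p n * ((M n * ρ' n).trace).re
        ≤ ∑ n, (p n * ((M n * ρ n).trace).re + p n * ((1/2) * δ n)) :=
          Finset.sum_le_sum fun n _ => hterm n
      _ = (∑ n, p n * ((M n * ρ n).trace).re) + ∑ n, p n * ((1/2) * δ n) :=
          Finset.sum_add_distrib
      _ ≤ sSup S + c := by
          refine add_le_add hy (le_of_eq ?_)
          rw [hc, Finset.mul_sum]
          exact Finset.sum_congr rfl fun n _ => by ring
  rw [helstrom, helstrom, ← hS, ← hS']
  linarith
end
end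

section
/- Reduction of the optimal POVM under geometric uniform symmetry: Let S be an N×N complex unitary matrix with S^m = I, let ρ_0 be a density matrix on ℂ^N, and set ρ_n = S^n·ρ_0·(Sᴴ)^n for n = 0,…,m−1. Then the Helstrom error probability of the equiprobable states (ρ_n)_{n=0}^{m−1} equals 1 − sup { Re(tr(Π_0·ρ_0)) : Π_0 an N×N positive semidefinite complex matrix with Σ_{n=0}^{m−1} S^n·Π_0·(Sᴴ)^n = I }. -/
open Matrix BigOperators Finset ComplexOrder

noncomputable section

lemma psd_smul {ι : Type*} [Fintype ι] {A : Matrix ι ι ℂ} (hA : A.PosSemidef)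
    {c : ℂ} (hc : 0 ≤ c) : (c • A).PosSemidef := by
  have hcs : star c = c := by
    rw [Complex.star_def, Complex.conj_eq_iff_im]
    exact (Complex.nonneg_iff.mp hc).2.symm
  refine ⟨?_, fun x => ?_⟩
  · rw [Matrix.IsHermitian, conjTranspose_smul, hcs, hA.1.eq]
  · exact (hA.smul hc).2 x

lemma psd_sum {ι κ : Type*} [Fintype ι] (s : Finset κ) (f : κ → Matrix ι ι ℂ)
    (h : ∀ i ∈ s, (f i).PosSemidef) : (∑ i ∈ s, f i).PosSemidef :=
  Finset.sum_induction f _ (fun _ _ ha hb => ha.add hb) Matrix.PosSemidef.zero h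


/-- Reduction of the optimal POVM under geometric uniform symmetry. -/
theorem helstrom_GUS {N m : ℕ} (hm : 1 ≤ m)
    (S : Matrix (Fin N) (Fin N) ℂ) (hS : Sᴴ * S = 1) (hSm : S ^ m = 1)
    (ρ0 : Matrix (Fin N) (Fin N) ℂ) (hρ0 : IsDensityMatrix ρ0) :
    helstrom (fun n : Fin m => S^(n:ℕ) * ρ0 * (Sᴴ)^(n:ℕ)) (fun _ => 1/(m:ℝ))
      = 1 - sSup { x : ℝ | ∃ M0 : Matrix (Fin N) (Fin N) ℂ, M0.PosSemidef ∧
            (∑ n : Fin m, S^(n:ℕ) * M0 * (Sᴴ)^(n:ℕ)) = 1 ∧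
            x = ((M0 * ρ0).trace).re } := by
  haveI : NeZero m := ⟨by omega⟩
  have hm0 : (m : ℝ) ≠ 0 := by positivity
  have hSS : S * Sᴴ = 1 := mul_eq_one_comm.mp hS
  -- inverse powers
  have hinv : ∀ n : ℕ, (Sᴴ)^n * S^n = 1 := by
    intro n
    induction n with
    | zero => simp
    | succ k ih =>
        rw [pow_succ Sᴴ, pow_succ' S, Matrix.mul_assoc, ← Matrix.mul_assoc Sᴴ, hS,
          Matrix.one_mul, ih]
  have hinv' : ∀ n : ℕ, S^n * (Sᴴ)^n = 1 := by
    intro n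
    induction n with
    | zero => simp
    | succ k ih =>
        rw [pow_succ S, pow_succ' Sᴴ, Matrix.mul_assoc, ← Matrix.mul_assoc S, hSS,
          Matrix.one_mul, ih]
  have hmod : ∀ a : ℕ, S ^ a = S ^ (a % m) := by
    intro a
    conv_lhs => rw [← Nat.div_add_mod a m]
    rw [pow_add, pow_mul, hSm, one_pow, one_mul]
  have hadd : ∀ a b : Fin m, S ^ (a:ℕ) * S ^ (b:ℕ) = S ^ (((a + b) : Fin m) : ℕ) := by
    intro a b
    rw [← pow_add, hmod ((a:ℕ) + b), Fin.val_add]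
  have hkey : ∀ k n : Fin m, S ^ (k:ℕ) * (Sᴴ) ^ (n:ℕ) = S ^ (((k - n) : Fin m) : ℕ) := by
    intro k n
    have h1 : S ^ (((k - n) : Fin m) : ℕ) * S ^ (n:ℕ) = S ^ (k:ℕ) := by
      rw [hadd, sub_add_cancel]
    calc S ^ (k:ℕ) * (Sᴴ) ^ (n:ℕ)
        = S ^ (((k - n) : Fin m) : ℕ) * (S ^ (n:ℕ) * (Sᴴ) ^ (n:ℕ)) := by
          rw [← Matrix.mul_assoc, h1]
      _ = S ^ (((k - n) : Fin m) : ℕ) := by rw [hinv', Matrix.mul_one]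
  have hkey' : ∀ k n : Fin m, S ^ (n:ℕ) * (Sᴴ) ^ (k:ℕ) = (Sᴴ) ^ (((k - n) : Fin m) : ℕ) := by
    intro k n
    have := congrArg Matrix.conjTranspose (hkey k n)
    simpa [Matrix.conjTranspose_mul, Matrix.conjTranspose_pow] using this
  unfold helstrom
  congr 2
  ext x
  simp only [Set.mem_setOf_eq]
  constructor
  · rintro ⟨M, hpsd, hsum, hx⟩
    refine ⟨(((m:ℝ)⁻¹ : ℝ) : ℂ) • ∑ n : Fin m, (Sᴴ)^(n:ℕ) * M n * S^(n:ℕ), ?_, ?_, ?_⟩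
    · apply psd_smul
      · apply psd_sum
        intro n _
        have : S^(n:ℕ) = ((Sᴴ)^(n:ℕ))ᴴ := by
          rw [← Matrix.conjTranspose_pow, Matrix.conjTranspose_conjTranspose]
        rw [this]
        exact (hpsd n).mul_mul_conjTranspose_same _
      · exact Complex.zero_le_real.mpr (by positivity)
    · have expand : ∀ k : Fin m,
          S^(k:ℕ) * ((((m:ℝ)⁻¹ : ℝ) : ℂ) • ∑ n : Fin m, (Sᴴ)^(n:ℕ) * M n * S^(n:ℕ)) * (Sᴴ)^(k:ℕ)
          = (((m:ℝ)⁻¹ : ℝ) : ℂ) • ∑ n : Fin m,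
              S^(((k - n : Fin m)):ℕ) * M n * (Sᴴ)^(((k - n : Fin m)):ℕ) := by
        intro k
        rw [Matrix.mul_smul, Matrix.smul_mul, Finset.mul_sum, Finset.sum_mul]
        congr 1
        refine Finset.sum_congr rfl fun n _ => ?_
        calc S^(k:ℕ) * ((Sᴴ)^(n:ℕ) * M n * S^(n:ℕ)) * (Sᴴ)^(k:ℕ)
            = (S^(k:ℕ) * (Sᴴ)^(n:ℕ)) * M n * (S^(n:ℕ) * (Sᴴ)^(k:ℕ)) := by
              simp only [Matrix.mul_assoc]
          _ = _ := by rw [hkey, hkey']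
      rw [Finset.sum_congr rfl fun k _ => expand k, ← Finset.smul_sum]
      have swap : ∑ k : Fin m, ∑ n : Fin m,
          S^(((k - n : Fin m)):ℕ) * M n * (Sᴴ)^(((k - n : Fin m)):ℕ)
          = ∑ n : Fin m, ∑ j : Fin m, S^(j:ℕ) * M n * (Sᴴ)^(j:ℕ) := by
        rw [Finset.sum_comm]
        refine Finset.sum_congr rfl fun n _ => ?_
        exact Fintype.sum_equiv (Equiv.subRight n) _ _ (fun k => rfl)
      rw [swap, Finset.sum_comm]
      have : ∑ j : Fin m, ∑ n : Fin m, S^(j:ℕ) * M n * (Sᴴ)^(j:ℕ)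
          = (m : ℂ) • (1 : Matrix (Fin N) (Fin N) ℂ) := by
        have : ∀ j : Fin m, ∑ n : Fin m, S^(j:ℕ) * M n * (Sᴴ)^(j:ℕ) = 1 := by
          intro j
          rw [← Finset.sum_mul, ← Finset.mul_sum, hsum, Matrix.mul_one, hinv']
        rw [Finset.sum_congr rfl fun j _ => this j]
        simp [Finset.card_univ, Nat.cast_smul_eq_nsmul ℂ]
      rw [this, smul_smul]
      rw [show ((((m:ℝ)⁻¹ : ℝ) : ℂ)) * (m : ℂ) = 1 by
        push_cast
        field_simp]
      simp
    · rw [hx]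
      rw [Matrix.smul_mul, Matrix.trace_smul, Finset.sum_mul, Matrix.trace_sum]
      rw [smul_eq_mul, Complex.re_ofReal_mul, Complex.re_sum, Finset.mul_sum]
      refine Finset.sum_congr rfl fun n _ => ?_
      rw [one_div]
      congr 1
      have e1 : M n * (S^(n:ℕ) * ρ0 * (Sᴴ)^(n:ℕ)) = (M n * (S^(n:ℕ) * ρ0)) * (Sᴴ)^(n:ℕ) :=
        (Matrix.mul_assoc _ _ _).symm
      rw [e1, Matrix.trace_mul_cycle, ← Matrix.mul_assoc]
  · rintro ⟨M0, hpsd, hsum, hx⟩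
    refine ⟨fun n => S^(n:ℕ) * M0 * (Sᴴ)^(n:ℕ), fun n => ?_, hsum, ?_⟩
    · show (S^(n:ℕ) * M0 * (Sᴴ)^(n:ℕ)).PosSemidef
      have : (Sᴴ)^(n:ℕ) = (S^(n:ℕ))ᴴ := (Matrix.conjTranspose_pow S n).symm
      rw [this]
      exact hpsd.mul_mul_conjTranspose_same _
    · have htr : ∀ n : Fin m,
          ((S^(n:ℕ) * M0 * (Sᴴ)^(n:ℕ) * (S^(n:ℕ) * ρ0 * (Sᴴ)^(n:ℕ))).trace) = (M0 * ρ0).trace := by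
        intro n
        have e1 : S^(n:ℕ) * M0 * (Sᴴ)^(n:ℕ) * (S^(n:ℕ) * ρ0 * (Sᴴ)^(n:ℕ))
            = S^(n:ℕ) * (M0 * ρ0) * (Sᴴ)^(n:ℕ) := by
          simp only [Matrix.mul_assoc]
          rw [← Matrix.mul_assoc ((Sᴴ)^(n:ℕ)) (S^(n:ℕ)), hinv n, Matrix.one_mul]
        rw [e1, Matrix.trace_mul_cycle, ← Matrix.mul_assoc, hinv, Matrix.one_mul]
      simp only [htr]
      rw [Finset.sum_const, Finset.card_univ, Fintype.card_fin, nsmul_eq_mul, hx]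
      field_simp
end
end

section
/- Closed form of the channel-position-finding error function for one use (u = 1): For every integer m ≥ 2 and all q_B ∈ (0,1), q_T ∈ [0,1], h_m^1(q_B, q_T) = 1 − (1/m)·[ q_T·q_B^{m−1} + (1−q_T)·(1−q_B)^{m−1} + (1 − (1−q_B)^m − q_B^m)·max( q_T/q_B , (1−q_T)/(1−q_B) ) ]. -/
open Matrix BigOperators Finset ComplexOrder

noncomputable section

/-- Hamming weight of a Boolean string. -/
def hamming {u : ℕ} (x : Fin u → Bool) : ℕ :=
  (Finset.univ.filter fun k => x k = true).card

open Classical in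
/-- The channel-position-finding error function `h_m^u(qB,qT)`. -/
def hErr (m u : ℕ) (qB qT : ℝ) : ℝ :=
  1 - (1/(m:ℝ)) * ∑ x : Fin m → Fin u → Bool,
    (let w : Fin m → ℕ := fun ℓ => hamming (x ℓ)
     let W : ℕ := ∑ ℓ, w ℓ
     let ws : ℕ := if qB ≤ qT then Finset.univ.sup w else sInf (Set.range w)
     qT^ws * (1-qT)^(u-ws) * (qB^(W-ws) * (1-qB)^((m-1)*u-(W-ws))))

/-! ### Auxiliary lemmas -/

private def Wc {m : ℕ} (y : Fin m → Bool) : ℕ :=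
  (Finset.univ.filter fun ℓ => y ℓ = true).card

private def eQ {m : ℕ} : (Fin m → Bool) ≃ (Fin m → Fin 1 → Bool) where
  toFun y ℓ _ := y ℓ
  invFun x ℓ := x ℓ 0
  left_inv y := rfl
  right_inv x := funext fun ℓ => funext fun k => by
    have hk : k = 0 := Subsingleton.elim _ _
    rw [hk]

private lemma hamming_one (b : Bool) :
    hamming (fun _ : Fin 1 => b) = if b = true then 1 else 0 := by
  cases b <;> simp [hamming]

private lemma hamming_eQ {m : ℕ} (y : Fin m → Bool) (ℓ : Fin m) :
    hamming (eQ y ℓ) = if y ℓ = true then 1 else 0 := hamming_one (y ℓ)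

private lemma Wc_le {m : ℕ} (y : Fin m → Bool) : Wc y ≤ m := by
  simpa [Wc] using Finset.card_filter_le (univ : Finset (Fin m)) (fun ℓ => y ℓ = true)

private lemma sum_ite_Wc {m : ℕ} (y : Fin m → Bool) :
    ∑ ℓ, (if y ℓ = true then (1:ℕ) else 0) = Wc y :=
  (Finset.card_filter _ _).symm

private lemma Wc_pos {m : ℕ} (y : Fin m → Bool) (hy : y ≠ fun _ => false) :
    1 ≤ Wc y := by
  obtain ⟨ℓ, hℓ⟩ : ∃ ℓ, y ℓ = true := by
    by_contra h
    push_neg at h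
    exact hy (funext fun ℓ => by simpa using h ℓ)
  have h1 : ℓ ∈ Finset.univ.filter fun ℓ => y ℓ = true := by simp [hℓ]
  have h2 := Finset.card_pos.mpr ⟨ℓ, h1⟩
  simpa [Wc] using h2

private lemma Wc_lt {m : ℕ} (y : Fin m → Bool) (hy : y ≠ fun _ => true) :
    Wc y < m := by
  obtain ⟨ℓ, hℓ⟩ : ∃ ℓ, y ℓ = false := by
    by_contra h
    push_neg at h
    exact hy (funext fun ℓ => by simpa using h ℓ)
  have h1 := Finset.card_filter_add_card_filter_not
    (s := (univ : Finset (Fin m))) (p := fun ℓ => y ℓ = true)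
  have h2 : ℓ ∈ Finset.univ.filter fun ℓ => ¬ (y ℓ = true) := by simp [hℓ]
  have h3 := Finset.card_pos.mpr ⟨ℓ, h2⟩
  simp only [Finset.card_univ, Fintype.card_fin] at h1
  unfold Wc
  omega

private lemma Wc_false {m : ℕ} : Wc (fun _ : Fin m => false) = 0 := by simp [Wc]

private lemma Wc_true {m : ℕ} : Wc (fun _ : Fin m => true) = m := by simp [Wc]

private lemma prod_ite_pow {m : ℕ} (a b : ℝ) (y : Fin m → Bool) :
    (∏ ℓ, if y ℓ = true then a else b) = a ^ Wc y * b ^ (m - Wc y) := by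
  classical
  rw [Finset.prod_ite, Finset.prod_const, Finset.prod_const]
  congr 2
  have h := Finset.card_filter_add_card_filter_not
    (s := (univ : Finset (Fin m))) (p := fun ℓ => y ℓ = true)
  simp only [Finset.card_univ, Fintype.card_fin] at h
  unfold Wc
  omega

private lemma sum_P {m : ℕ} (qB : ℝ) :
    ∑ y : Fin m → Bool, qB ^ Wc y * (1-qB) ^ (m - Wc y) = 1 := by
  classical
  have h : ∀ y : Fin m → Bool,
      qB ^ Wc y * (1-qB) ^ (m - Wc y) = ∏ ℓ, if y ℓ = true then qB else 1-qB :=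
    fun y => (prod_ite_pow qB (1-qB) y).symm
  rw [Finset.sum_congr rfl fun y _ => h y, ← Fintype.piFinset_univ,
    ← Finset.prod_univ_sum (t := fun _ : Fin m => (univ : Finset Bool))
      (f := fun _ b => if b = true then qB else 1 - qB)]
  simp

private lemma sup_w_one {m : ℕ} (y : Fin m → Bool) (hy : y ≠ fun _ => false) :
    Finset.univ.sup (fun ℓ => if y ℓ = true then (1:ℕ) else 0) = 1 := by
  obtain ⟨ℓ, hℓ⟩ : ∃ ℓ, y ℓ = true := by
    by_contra h
    push_neg at h
    exact hy (funext fun ℓ => by simpa using h ℓ)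
  apply le_antisymm
  · exact Finset.sup_le fun i _ => by split <;> omega
  · have := Finset.le_sup (f := fun ℓ => if y ℓ = true then (1:ℕ) else 0) (mem_univ ℓ)
    simpa [hℓ] using this

private lemma sInf_w_zero {m : ℕ} (y : Fin m → Bool) (hy : y ≠ fun _ => true) :
    sInf (Set.range (fun ℓ => if y ℓ = true then (1:ℕ) else 0)) = 0 := by
  obtain ⟨ℓ, hℓ⟩ : ∃ ℓ, y ℓ = false := by
    by_contra h
    push_neg at h
    exact hy (funext fun ℓ => by simpa using h ℓ)
  rw [Nat.sInf_eq_zero]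
  exact Or.inl ⟨ℓ, by simp [hℓ]⟩

/-- Closed form of the channel-position-finding error function for one use. -/
theorem hErr_one_shot (m : ℕ) (hm : 2 ≤ m)
    (qB qT : ℝ) (hB : qB ∈ Set.Ioo (0:ℝ) 1) (hT : qT ∈ Set.Icc (0:ℝ) 1) :
    hErr m 1 qB qT = 1 - (1/(m:ℝ)) *
      (qT * qB^(m-1) + (1-qT) * (1-qB)^(m-1)
        + (1 - (1-qB)^m - qB^m) * max (qT/qB) ((1-qT)/(1-qB))) := by
  classical
  obtain ⟨hB0, hB1⟩ := hB
  obtain ⟨hT0, hT1⟩ := hT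
  have hqB : qB ≠ 0 := ne_of_gt hB0
  have hqB1 : (1:ℝ) - qB ≠ 0 := by intro h; linarith
  have hB1' : (0:ℝ) < 1 - qB := by linarith
  obtain ⟨n, rfl⟩ : ∃ n, m = n + 2 := ⟨m - 2, by omega⟩
  simp only [hErr]
  rw [← Equiv.sum_comp (eQ (m := n+2)) _]
  simp only [hamming_eQ, sum_ite_Wc, mul_one, show n + 2 - 1 = n + 1 from rfl]
  rcases le_or_gt qB qT with hle | hlt
  · -- ws = sup, max = qT/qB
    have hmax : max (qT/qB) ((1-qT)/(1-qB)) = qT/qB := by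
      apply max_eq_left
      rw [div_le_div_iff₀ hB1' hB0]
      nlinarith
    rw [hmax]
    simp only [if_pos hle]
    congr 1
    congr 1
    -- the sum
    have hcong : ∀ y : Fin (n+2) → Bool,
        qT ^ (Finset.univ.sup fun ℓ => if y ℓ = true then 1 else 0) *
        (1-qT) ^ (1 - Finset.univ.sup fun ℓ => if y ℓ = true then 1 else 0) *
        (qB ^ (Wc y - Finset.univ.sup fun ℓ => if y ℓ = true then 1 else 0) *
          (1-qB) ^ (n + 1 - (Wc y - Finset.univ.sup fun ℓ => if y ℓ = true then 1 else 0))) =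
        if y = (fun _ => false) then (1-qT) * (1-qB)^(n+1)
        else (qT/qB) * (qB ^ Wc y * (1-qB) ^ (n + 2 - Wc y)) := by
      intro y
      by_cases hy : y = fun _ => false
      · subst hy
        rw [if_pos rfl]
        have hsup0 : (Finset.univ.sup fun _ : Fin (n+2) => (0:ℕ)) = 0 :=
          Nat.le_zero.mp (Finset.sup_le fun i _ => le_rfl)
        simp [Wc_false, hsup0]
      · rw [if_neg hy, sup_w_one y hy]
        obtain ⟨k, hk⟩ : ∃ k, Wc y = k + 1 := ⟨Wc y - 1, by have := Wc_pos y hy; omega⟩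
        rw [hk]
        have h1 : k + 1 - 1 = k := rfl
        have h2 : n + 2 - (k + 1) = n + 1 - k := by omega
        rw [h1, h2]
        norm_num
        field_simp
        ring
    rw [Finset.sum_congr rfl fun y _ => hcong y]
    rw [← Finset.add_sum_erase _ _ (mem_univ (fun _ : Fin (n+2) => false))]
    rw [if_pos rfl]
    have herase : ∑ y ∈ (univ.erase (fun _ : Fin (n+2) => false)),
        (if y = (fun _ => false) then (1-qT) * (1-qB)^(n+1)
         else (qT/qB) * (qB ^ Wc y * (1-qB) ^ (n + 2 - Wc y))) =
        (qT/qB) * (1 - (1-qB)^(n+2)) := by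
      rw [Finset.sum_congr rfl (fun y hy => if_neg (Finset.mem_erase.mp hy).1)]
      rw [← Finset.mul_sum, Finset.sum_erase_eq_sub (mem_univ _), sum_P]
      rw [Wc_false]
      norm_num
    rw [herase]
    have hpow : qB^(n+2) = qB^(n+1) * qB := by ring
    field_simp
    ring
  · -- ws = sInf, max = (1-qT)/(1-qB)
    have hmax : max (qT/qB) ((1-qT)/(1-qB)) = (1-qT)/(1-qB) := by
      apply max_eq_right
      rw [div_le_div_iff₀ hB0 hB1']
      nlinarith
    rw [hmax]
    have hnle : ¬ (qB ≤ qT) := not_le.mpr hlt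
    simp only [if_neg hnle]
    congr 1
    congr 1
    have hcong : ∀ y : Fin (n+2) → Bool,
        qT ^ (sInf (Set.range fun ℓ => if y ℓ = true then 1 else 0)) *
        (1-qT) ^ (1 - sInf (Set.range fun ℓ => if y ℓ = true then 1 else 0)) *
        (qB ^ (Wc y - sInf (Set.range fun ℓ => if y ℓ = true then 1 else 0)) *
          (1-qB) ^ (n + 1 - (Wc y - sInf (Set.range fun ℓ => if y ℓ = true then 1 else 0)))) =
        if y = (fun _ => true) then qT * qB^(n+1)
        else ((1-qT)/(1-qB)) * (qB ^ Wc y * (1-qB) ^ (n + 2 - Wc y)) := by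
      intro y
      by_cases hy : y = fun _ => true
      · subst hy
        rw [if_pos rfl]
        have hr : (Set.range fun _ : Fin (n+2) => if (true:Bool) = true then (1:ℕ) else 0)
            = {1} := by
          simp [Set.range_const]
        rw [hr]
        simp [Wc_true]
      · rw [if_neg hy, sInf_w_zero y hy]
        have hW := Wc_lt y hy
        have h2 : n + 2 - Wc y = (n + 1 - Wc y) + 1 := by omega
        rw [h2, pow_succ]
        simp only [Nat.sub_zero, pow_zero, pow_one]
        field_simp
        ring
    rw [Finset.sum_congr rfl fun y _ => hcong y]
    rw [← Finset.add_sum_erase _ _ (mem_univ (fun _ : Fin (n+2) => true))]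
    rw [if_pos rfl]
    have herase : ∑ y ∈ (univ.erase (fun _ : Fin (n+2) => true)),
        (if y = (fun _ => true) then qT * qB^(n+1)
         else ((1-qT)/(1-qB)) * (qB ^ Wc y * (1-qB) ^ (n + 2 - Wc y))) =
        ((1-qT)/(1-qB)) * (1 - qB^(n+2)) := by
      rw [Finset.sum_congr rfl (fun y hy => if_neg (Finset.mem_erase.mp hy).1)]
      rw [← Finset.mul_sum, Finset.sum_erase_eq_sub (mem_univ _), sum_P]
      rw [Wc_true]
      norm_num
    rw [herase]
    field_simp
    ring
end
end

section
/- Helstrom limit for channel position finding with depolarizing channels and maximally entangled inputs (Proposition, non-adaptive content): Let d ≥ 2 and let ζ be the d²-dimensional maximally entangled pure state. For q ∈ [0,1] set τ_q = q·(1/d²)·I_{d²} + (1−q)·ζ, a density matrix on ℂ^{d²}. Let m ≥ 2 and q_B, q_T ∈ [0,1], and for n = 0,…,m−1 define ρ_n = τ_{c_0} ⊗ τ_{c_1} ⊗ … ⊗ τ_{c_{m−1}} on (ℂ^{d²})^{⊗m}, where c_n = q_T and c_k = q_B for k ≠ n. Then for every u ≥ 1, the Helstrom error probability of the equiprobable states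 (ρ_n^{⊗u})_{n=0}^{m−1} equals h_m^u((1 − d^{−2})·q_B, (1 − d^{−2})·q_T). -/
open Matrix BigOperators Finset ComplexOrder

noncomputable section

/-- The `u`-fold Kronecker (tensor) power of a square matrix. -/
def tensorPow {ι : Type*} (σ : Matrix ι ι ℂ) (u : ℕ) :
    Matrix (Fin u → ι) (Fin u → ι) ℂ :=
  fun i j => ∏ k, σ (i k) (j k)

/-- Tensor product of a family of `m` square matrices. -/
def tensorFam {m : ℕ} {ι : Type*} (σ : Fin m → Matrix ι ι ℂ) :
    Matrix (Fin m → ι) (Fin m → ι) ℂ :=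
  fun i j => ∏ k, σ k (i k) (j k)

/-- The `d²`-dimensional maximally entangled pure state. -/
def maxEnt (d : ℕ) : Matrix (Fin d × Fin d) (Fin d × Fin d) ℂ :=
  fun p q => if p.1 = p.2 ∧ q.1 = q.2 then (1/(d:ℂ)) else 0

/-- The Choi matrix of the depolarizing channel:
`τ_q = q (1/d²) I + (1−q) ζ`. -/
def depolChoi (d : ℕ) (q : ℝ) : Matrix (Fin d × Fin d) (Fin d × Fin d) ℂ :=
  (q:ℂ) • ((1/(d:ℂ)^2) • (1 : Matrix (Fin d × Fin d) (Fin d × Fin d) ℂ))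
    + (((1-q : ℝ)):ℂ) • maxEnt d


namespace CPFAux

def gg (a b : ℝ) (u N W w : ℕ) : ℝ :=
  b^w * (1-b)^(u-w) * (a^(W-w) * (1-a)^(N-(W-w)))

lemma gg_id {a b : ℝ} {u N W w w' : ℕ} (hww' : w ≤ w') (hw'u : w' ≤ u)
    (hw'W : w' ≤ W) (hWwN : W - w ≤ N) :
    gg a b u N W w * (b*(1-a))^(w'-w) = gg a b u N W w' * (a*(1-b))^(w'-w) := by
  set δ := w' - w with hδ
  have e1 : w' = w + δ := by omega
  have e2 : u - w = (u - w') + δ := by omega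
  have e3 : W - w = (W - w') + δ := by omega
  have e4 : N - (W - w') = (N - (W - w)) + δ := by omega
  have p1 : b^w' = b^w * b^δ := by rw [e1, pow_add]
  have p2 : (1-b)^(u-w) = (1-b)^(u-w') * (1-b)^δ := by rw [e2, pow_add]
  have p3 : a^(W-w) = a^(W-w') * a^δ := by rw [e3, pow_add]
  have p4 : (1-a)^(N-(W-w')) = (1-a)^(N-(W-w)) * (1-a)^δ := by rw [e4, pow_add]
  simp only [gg, p1, p2, p3, p4, mul_pow]
  ring

lemma gg_zero {u N W w : ℕ} (hwW : w ≤ W) : gg 0 0 u N W w = 0^W := by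
  simp only [gg, sub_zero, one_pow, mul_one, one_mul, ← pow_add]
  congr 1
  omega

lemma gg_nonneg {a b : ℝ} {u N W w : ℕ} (h0a : 0 ≤ a) (ha1 : a ≤ 1)
    (h0b : 0 ≤ b) (hb1 : b ≤ 1) : 0 ≤ gg a b u N W w := by
  have := sub_nonneg.2 ha1
  have := sub_nonneg.2 hb1
  apply mul_nonneg (mul_nonneg (pow_nonneg h0b _) (pow_nonneg ‹(0:ℝ) ≤ 1 - b› _))
  exact mul_nonneg (pow_nonneg h0a _) (pow_nonneg ‹(0:ℝ) ≤ 1 - a› _)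

lemma gg_le {a b : ℝ} {u N W w w' : ℕ} (h0a : 0 ≤ a) (hab : a ≤ b) (hb1 : b < 1)
    (hww' : w ≤ w') (hw'u : w' ≤ u) (hw'W : w' ≤ W) (hWwN : W - w ≤ N) :
    gg a b u N W w ≤ gg a b u N W w' := by
  have h0b : 0 ≤ b := le_trans h0a hab
  have ha1 : a < 1 := lt_of_le_of_lt hab hb1
  by_cases hb0 : b = 0
  · have ha0 : a = 0 := le_antisymm (hb0 ▸ hab) h0a
    rw [ha0, hb0, gg_zero (le_trans hww' hw'W), gg_zero hw'W]
  · have hbpos : 0 < b := lt_of_le_of_ne h0b (Ne.symm hb0)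
    have hApos : 0 < b * (1-a) := mul_pos hbpos (by linarith)
    have hkey := gg_id (a := a) (b := b) (u := u) (N := N) hww' hw'u hw'W hWwN
    have hBA : (a*(1-b))^(w'-w) ≤ (b*(1-a))^(w'-w) := by
      apply pow_le_pow_left₀ (mul_nonneg h0a (by linarith))
      nlinarith
    have hgg' : 0 ≤ gg a b u N W w' := gg_nonneg h0a ha1.le h0b hb1.le
    have h2 : gg a b u N W w * (b*(1-a))^(w'-w)
        ≤ gg a b u N W w' * (b*(1-a))^(w'-w) := by
      rw [hkey]; exact mul_le_mul_of_nonneg_left hBA hgg'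
    exact le_of_mul_le_mul_right h2 (pow_pos hApos _)

lemma gg_ge {a b : ℝ} {u N W w w' : ℕ} (h0b : 0 ≤ b) (hba : b ≤ a) (ha1 : a < 1)
    (hww' : w ≤ w') (hw'u : w' ≤ u) (hw'W : w' ≤ W) (hWwN : W - w ≤ N) :
    gg a b u N W w' ≤ gg a b u N W w := by
  have h0a : 0 ≤ a := le_trans h0b hba
  have hb1 : b < 1 := lt_of_le_of_lt hba ha1
  by_cases ha0 : a = 0
  · have hb0 : b = 0 := le_antisymm (ha0 ▸ hba) h0b
    rw [ha0, hb0, gg_zero (le_trans hww' hw'W), gg_zero hw'W]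
  · have hapos : 0 < a := lt_of_le_of_ne h0a (Ne.symm ha0)
    have hBpos : 0 < a * (1-b) := mul_pos hapos (by linarith)
    have hkey := gg_id (a := a) (b := b) (u := u) (N := N) hww' hw'u hw'W hWwN
    have hAB : (b*(1-a))^(w'-w) ≤ (a*(1-b))^(w'-w) := by
      apply pow_le_pow_left₀ (mul_nonneg h0b (by linarith))
      nlinarith
    have hgg : 0 ≤ gg a b u N W w := gg_nonneg h0a ha1.le h0b hb1.le
    have h2 : gg a b u N W w' * (a*(1-b))^(w'-w)
        ≤ gg a b u N W w * (a*(1-b))^(w'-w) := by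
      rw [← hkey]; exact mul_le_mul_of_nonneg_left hAB hgg
    exact le_of_mul_le_mul_right h2 (pow_pos hBpos _)




variable {ι : Type*} [Fintype ι] [DecidableEq ι] {Y : Type*} [Fintype Y] [DecidableEq Y]

local notation "conj'" => (starRingEnd ℂ)

def qf (ket : Y → ι → ℂ) (M : Matrix ι ι ℂ) (y : Y) : ℂ :=
  ∑ i, ∑ j, conj' (ket y i) * M i j * ket y j

lemma qf_eq_dot (ket : Y → ι → ℂ) (M : Matrix ι ι ℂ) (y : Y) :
    qf ket M y = star (ket y) ⬝ᵥ (M *ᵥ ket y) := by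
  simp only [qf, dotProduct, Matrix.mulVec, dotProduct, Pi.star_apply, Finset.mul_sum]
  refine Finset.sum_congr rfl fun i _ => Finset.sum_congr rfl fun j _ => ?_
  simp only [Complex.star_def, mul_assoc]

lemma swap3 {α β γ : Type*} [Fintype α] [Fintype β] [Fintype γ] (F : α → β → γ → ℂ) :
    ∑ i : α, ∑ j : β, ∑ y : γ, F i j y = ∑ y, ∑ i, ∑ j, F i j y := by
  calc ∑ i : α, ∑ j : β, ∑ y : γ, F i j y
      = ∑ i : α, ∑ y : γ, ∑ j : β, F i j y :=
        Finset.sum_congr rfl fun _ _ => Finset.sum_comm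
    _ = ∑ y, ∑ i, ∑ j, F i j y := Finset.sum_comm

lemma triple_sum (t : Finset Y) (a b : ι → Y → ℂ) :
    (∑ i, ∑ j, ∑ y ∈ t, a i y * b j y) = ∑ y ∈ t, (∑ i, a i y) * (∑ j, b j y) := by
  calc (∑ i, ∑ j, ∑ y ∈ t, a i y * b j y)
      = ∑ i, ∑ y ∈ t, ∑ j, a i y * b j y :=
        Finset.sum_congr rfl fun _ _ => Finset.sum_comm
    _ = ∑ y ∈ t, ∑ i, ∑ j, a i y * b j y := Finset.sum_comm
    _ = ∑ y ∈ t, (∑ i, a i y) * (∑ j, b j y) := by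
        refine Finset.sum_congr rfl fun y _ => ?_
        rw [Finset.sum_mul_sum]

theorem helstrom_eq_classical {m : ℕ}
    (ρ : Fin m → Matrix ι ι ℂ) (ket : Y → ι → ℂ) (P : Fin m → Y → ℝ) (Pmax : Y → ℝ)
    (horth : ∀ y y', (∑ i, conj' (ket y i) * ket y' i) = if y = y' then 1 else 0)
    (hcomp : ∀ i j, (∑ y, ket y i * conj' (ket y j)) = if i = j then 1 else 0)
    (hdec : ∀ n i j, ρ n i j = ∑ y, (P n y : ℂ) * (ket y i * conj' (ket y j)))
    (hle : ∀ n y, P n y ≤ Pmax y) (hex : ∀ y, ∃ n, P n y = Pmax y) :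
    helstrom ρ (fun _ => 1/(m:ℝ)) = 1 - (1/(m:ℝ)) * ∑ y, Pmax y := by
  classical
  -- trace formula
  have trace_eq : ∀ (M : Matrix ι ι ℂ) (n : Fin m),
      (M * ρ n).trace = ∑ y, (P n y : ℂ) * qf ket M y := by
    intro M n
    have h1 : (M * ρ n).trace = ∑ i, ∑ j, M i j * ρ n j i := by
      simp [Matrix.trace, Matrix.mul_apply, Matrix.diag]
    rw [h1]
    have h2 : ∀ i j : ι, M i j * ρ n j i
        = ∑ y, (P n y : ℂ) * (conj' (ket y i) * M i j * ket y j) := by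
      intro i j
      rw [hdec n j i, Finset.mul_sum]
      exact Finset.sum_congr rfl fun y _ => by ring
    simp only [h2]
    rw [swap3]
    refine Finset.sum_congr rfl fun y _ => ?_
    simp only [← Finset.mul_sum]
    rfl
  have qf_nonneg : ∀ (M : Matrix ι ι ℂ), M.PosSemidef → ∀ y, (0:ℂ) ≤ qf ket M y := by
    intro M hM y
    rw [qf_eq_dot]
    exact hM.dotProduct_mulVec_nonneg (ket y)
  have qf_one : ∀ y, qf ket (1 : Matrix ι ι ℂ) y = 1 := by
    intro y
    have h : qf ket (1 : Matrix ι ι ℂ) y = ∑ i, conj' (ket y i) * ket y i := by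
      refine Finset.sum_congr rfl fun i _ => ?_
      rw [Finset.sum_eq_single i]
      · simp [Matrix.one_apply]
      · intro j _ hj
        simp [Matrix.one_apply_ne (Ne.symm hj)]
      · intro h; exact absurd (Finset.mem_univ i) h
    rw [h, horth y y, if_pos rfl]
  have qf_sum : ∀ (M : Fin m → Matrix ι ι ℂ) y,
      (∑ n, qf ket (M n) y) = qf ket (∑ n, M n) y := by
    intro M y
    simp only [qf, Matrix.sum_apply, Finset.mul_sum, Finset.sum_mul]
    rw [← swap3]
  -- the target value
  set V : ℝ := (1/(m:ℝ)) * ∑ y, Pmax y with hV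
  -- upper bound
  have hub : ∀ x ∈ { x : ℝ | ∃ M : Fin m → Matrix ι ι ℂ,
      (∀ n, (M n).PosSemidef) ∧ (∑ n, M n) = 1 ∧
      x = ∑ n, (fun _ : Fin m => 1/(m:ℝ)) n * ((M n * ρ n).trace).re }, x ≤ V := by
    rintro x ⟨M, hpsd, hsum, rfl⟩
    have hre : ∀ n, ((M n * ρ n).trace).re = ∑ y, P n y * (qf ket (M n) y).re := by
      intro n
      rw [trace_eq (M n) n, Complex.re_sum]
      refine Finset.sum_congr rfl fun y _ => ?_
      simp [Complex.mul_re]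
    have hr0 : ∀ n y, 0 ≤ (qf ket (M n) y).re := by
      intro n y
      have := qf_nonneg (M n) (hpsd n) y
      exact (Complex.le_def.mp this).1
    have hr1 : ∀ y, (∑ n, (qf ket (M n) y).re) = 1 := by
      intro y
      have : (∑ n, qf ket (M n) y) = 1 := by rw [qf_sum, hsum, qf_one]
      calc (∑ n, (qf ket (M n) y).re) = (∑ n, qf ket (M n) y).re := (Complex.re_sum _ _).symm
        _ = 1 := by rw [this]; rfl
    simp only [hre]
    have key : ∀ y, (∑ n, P n y * (qf ket (M n) y).re) ≤ Pmax y := by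
      intro y
      calc (∑ n, P n y * (qf ket (M n) y).re)
          ≤ ∑ n, Pmax y * (qf ket (M n) y).re :=
            Finset.sum_le_sum fun n _ => mul_le_mul_of_nonneg_right (hle n y) (hr0 n y)
        _ = Pmax y * ∑ n, (qf ket (M n) y).re := by rw [Finset.mul_sum]
        _ = Pmax y := by rw [hr1 y, mul_one]
    calc (∑ n, (fun _ : Fin m => 1/(m:ℝ)) n * ∑ y, P n y * (qf ket (M n) y).re)
        = (1/(m:ℝ)) * ∑ n, ∑ y, P n y * (qf ket (M n) y).re := by
          rw [← Finset.mul_sum]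
      _ = (1/(m:ℝ)) * ∑ y, ∑ n, P n y * (qf ket (M n) y).re := by rw [Finset.sum_comm]
      _ ≤ (1/(m:ℝ)) * ∑ y, Pmax y := by
          refine mul_le_mul_of_nonneg_left (Finset.sum_le_sum fun y _ => key y) ?_
          positivity
  -- the optimal POVM
  set D : Y → Fin m := fun y => Classical.choose (hex y) with hD
  have hDs : ∀ y, P (D y) y = Pmax y := fun y => Classical.choose_spec (hex y)
  set M : Fin m → Matrix ι ι ℂ := fun n => Matrix.of fun i j =>
    ∑ y ∈ univ.filter (fun y => D y = n), ket y i * conj' (ket y j) with hM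
  have hMsum : (∑ n, M n) = 1 := by
    ext i j
    rw [Matrix.sum_apply]
    calc (∑ n, M n i j)
        = ∑ n, ∑ y ∈ univ.filter (fun y => D y = n), ket y i * conj' (ket y j) := rfl
      _ = ∑ y, ket y i * conj' (ket y j) :=
          Finset.sum_fiberwise _ _ _
      _ = (1 : Matrix ι ι ℂ) i j := by rw [hcomp i j, Matrix.one_apply]
  have hMpsd : ∀ n, (M n).PosSemidef := by
    intro n
    rw [Matrix.posSemidef_iff_dotProduct_mulVec]
    constructor
    · ext i j
      simp only [Matrix.conjTranspose_apply, hM, Matrix.of_apply, star_sum, star_mul',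
        Complex.star_def, Complex.conj_conj]
      exact Finset.sum_congr rfl fun y _ => mul_comm _ _
    · intro x
      have h1 : ∀ i j, star (x i) * ((M n) i j * x j)
          = ∑ y ∈ univ.filter (fun y => D y = n),
              (conj' (x i) * ket y i) * (conj' (ket y j) * x j) := by
        intro i j
        simp only [hM, Matrix.of_apply, Finset.sum_mul, Finset.mul_sum]
        refine Finset.sum_congr rfl fun y _ => ?_
        simp only [Complex.star_def]; ring
      have h2 : star x ⬝ᵥ (M n *ᵥ x) = ∑ y ∈ univ.filter (fun y => D y = n),
          (∑ i, conj' (x i) * ket y i) * (∑ j, conj' (ket y j) * x j) := by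
        calc star x ⬝ᵥ (M n *ᵥ x)
            = ∑ i, ∑ j, star (x i) * ((M n) i j * x j) := by
              simp [dotProduct, Matrix.mulVec, Finset.mul_sum]
          _ = _ := by
              simp only [h1]
              exact triple_sum _ _ _
      rw [h2]
      refine Finset.sum_nonneg fun y _ => ?_
      have hcs : (∑ i, conj' (x i) * ket y i) = conj' (∑ j, conj' (ket y j) * x j) := by
        rw [map_sum]
        refine Finset.sum_congr rfl fun j _ => ?_
        rw [_root_.map_mul, Complex.conj_conj, mul_comm]
      rw [hcs, mul_comm, Complex.mul_conj]
      exact Complex.zero_le_real.mpr (Complex.normSq_nonneg _)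
  have qf_proj : ∀ n y, qf ket (M n) y = if D y = n then 1 else 0 := by
    intro n y
    have h1 : ∀ i j, conj' (ket y i) * ((M n) i j) * ket y j
        = ∑ y' ∈ univ.filter (fun y' => D y' = n),
            (conj' (ket y i) * ket y' i) * (conj' (ket y' j) * ket y j) := by
      intro i j
      simp only [hM, Matrix.of_apply, Finset.sum_mul, Finset.mul_sum]
      refine Finset.sum_congr rfl fun y' _ => by ring
    calc qf ket (M n) y
        = ∑ y' ∈ univ.filter (fun y' => D y' = n),
            (∑ i, conj' (ket y i) * ket y' i) * (∑ j, conj' (ket y' j) * ket y j) := by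
          simp only [qf, h1]
          exact triple_sum _ _ _
      _ = ∑ y' ∈ univ.filter (fun y' => D y' = n), (if y' = y then 1 else 0) := by
          refine Finset.sum_congr rfl fun y' _ => ?_
          rw [horth y y', horth y' y]
          by_cases h : y' = y
          · subst h; simp
          · simp [h, Ne.symm h]
      _ = if y ∈ univ.filter (fun y' => D y' = n) then 1 else 0 :=
          Finset.sum_ite_eq' _ _ _
      _ = if D y = n then 1 else 0 := by simp
  have hval : (∑ n, (fun _ : Fin m => 1/(m:ℝ)) n * ((M n * ρ n).trace).re) = V := by
    have htr : ∀ n, ((M n * ρ n).trace).re = ∑ y ∈ univ.filter (fun y => D y = n), P n y := by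
      intro n
      rw [trace_eq (M n) n]
      have : (∑ y, (P n y : ℂ) * qf ket (M n) y)
          = ∑ y ∈ univ.filter (fun y => D y = n), (P n y : ℂ) := by
        simp only [qf_proj, mul_ite, mul_one, mul_zero]
        rw [Finset.sum_filter]
      rw [this, ← Complex.ofReal_sum, Complex.ofReal_re]
    simp only [htr]
    rw [← Finset.mul_sum, hV]
    congr 1
    calc (∑ n, ∑ y ∈ univ.filter (fun y => D y = n), P n y)
        = ∑ n, ∑ y ∈ univ.filter (fun y => D y = n), Pmax y := by
          refine Finset.sum_congr rfl fun n _ => Finset.sum_congr rfl fun y hy => ?_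
          have : D y = n := (Finset.mem_filter.mp hy).2
          rw [← this, hDs y]
      _ = ∑ y, Pmax y := Finset.sum_fiberwise _ _ _
  have hgreat : IsGreatest { x : ℝ | ∃ M : Fin m → Matrix ι ι ℂ,
      (∀ n, (M n).PosSemidef) ∧ (∑ n, M n) = 1 ∧
      x = ∑ n, (fun _ : Fin m => 1/(m:ℝ)) n * ((M n * ρ n).trace).re } V :=
    ⟨⟨M, hMpsd, hMsum, hval.symm⟩, hub⟩
  unfold helstrom
  rw [hgreat.csSup_eq]



lemma sum_prod_pi {κ δ : Type*} [Fintype κ] [DecidableEq κ] [Fintype δ] (F : κ → δ → ℂ) :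
    (∑ z : κ → δ, ∏ k, F k (z k)) = ∏ k, ∑ c, F k c := by
  rw [Finset.prod_univ_sum, Fintype.piFinset_univ]

lemma prod_ite_eq_ite {κ δ : Type*} [Fintype κ] [DecidableEq δ] (f g : κ → δ) :
    (∏ p, if f p = g p then (1:ℂ) else 0) = if f = g then 1 else 0 := by
  by_cases h : f = g
  · subst h; simp
  · rw [if_neg h]
    obtain ⟨p, hp⟩ : ∃ p, f p ≠ g p := by
      by_contra hc; push_neg at hc; exact h (funext hc)
    exact Finset.prod_eq_zero (Finset.mem_univ p) (if_neg hp)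

set_option maxHeartbeats 1000000 in
lemma exists_good_basis {d : ℕ} (hd : 2 ≤ d) :
    ∃ (a₀ : Fin d × Fin d) (b : (Fin d × Fin d) → (Fin d × Fin d) → ℂ),
      (∀ a a', (∑ i, conj' (b a i) * b a' i) = if a = a' then 1 else 0) ∧
      (∀ i j, (∑ a, b a i * conj' (b a j)) = if i = j then 1 else 0) ∧
      (∀ i j : Fin d × Fin d, b a₀ i * conj' (b a₀ j) = maxEnt d i j) := by
  classical
  have hd0 : 0 < d := by omega
  have hdr : (2:ℝ) ≤ (d:ℝ) := by exact_mod_cast hd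
  set a₀ : Fin d × Fin d := (⟨0, hd0⟩, ⟨0, hd0⟩) with ha₀
  set w : EuclideanSpace ℂ (Fin d × Fin d) :=
    WithLp.toLp 2 (fun i : Fin d × Fin d => if i.1 = i.2 then (((Real.sqrt d)⁻¹ : ℝ) : ℂ) else 0) with hwdef
  have hww : ∀ i j : Fin d × Fin d, w i * conj' (w j) = maxEnt d i j := by
    intro i j
    show (if i.1 = i.2 then (((Real.sqrt d)⁻¹ : ℝ) : ℂ) else 0)
        * conj' (if j.1 = j.2 then (((Real.sqrt d)⁻¹ : ℝ) : ℂ) else 0) = maxEnt d i j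
    by_cases h1 : i.1 = i.2 <;> by_cases h2 : j.1 = j.2 <;>
      simp only [maxEnt, h1, h2, if_true, if_false, and_true, and_false, false_and,
        true_and, map_zero, mul_zero, zero_mul, and_self, ite_true, ite_false]
    rw [Complex.conj_ofReal, ← Complex.ofReal_mul, ← mul_inv,
      Real.mul_self_sqrt (by positivity), one_div, Complex.ofReal_inv, Complex.ofReal_natCast]
  have hwnorm : (inner ℂ w w : ℂ) = 1 := by
    rw [PiLp.inner_apply]
    have : ∀ i : Fin d × Fin d, (inner ℂ (w i) (w i) : ℂ) = maxEnt d i i := by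
      intro i
      rw [RCLike.inner_apply]
      exact hww i i
    rw [Finset.sum_congr rfl fun i _ => this i]
    simp only [maxEnt, and_self]
    rw [Fintype.sum_prod_type]
    have h3 : ∀ i1 : Fin d, (∑ i2 : Fin d, if i1 = i2 then (1/(d:ℂ)) else 0) = 1/(d:ℂ) := by
      intro i1
      rw [Finset.sum_ite_eq]
      simp
    rw [Finset.sum_congr rfl fun i1 _ => h3 i1]
    rw [Finset.sum_const, Finset.card_univ, Fintype.card_fin, nsmul_eq_mul]
    have : (d:ℂ) ≠ 0 := by
      simp only [ne_eq, Nat.cast_eq_zero]; omega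
    field_simp
  have horthw : Orthonormal ℂ (Set.restrict {a₀} (fun _ : Fin d × Fin d => w)) := by
    rw [orthonormal_iff_ite]
    intro i j
    have hij : i = j := Subsingleton.elim i j
    subst hij
    rw [if_pos rfl]
    exact hwnorm
  obtain ⟨B, hB⟩ := horthw.exists_orthonormalBasis_extension_of_card_eq
      (finrank_euclideanSpace (𝕜 := ℂ))
  have hBa₀ : B a₀ = w := hB a₀ rfl
  have horth : ∀ a a', (∑ i, conj' (B a i) * B a' i) = if a = a' then 1 else 0 := by
    intro a a'
    have h2 := (orthonormal_iff_ite.mp B.orthonormal) a a'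
    rw [PiLp.inner_apply] at h2
    simpa only [RCLike.inner_apply, mul_comm] using h2
  have hcomp : ∀ i j, (∑ a, B a i * conj' (B a j)) = if i = j then 1 else 0 := by
    intro i j
    set U : Matrix (Fin d × Fin d) (Fin d × Fin d) ℂ := Matrix.of (fun a i => B a i) with hU
    have hU1 : U * Uᴴ = 1 := by
      ext a a'
      rw [Matrix.mul_apply, Matrix.one_apply]
      calc (∑ i, U a i * Uᴴ i a') = ∑ i, B a i * conj' (B a' i) := by
            refine Finset.sum_congr rfl fun i _ => ?_
            simp [hU, Matrix.conjTranspose_apply, Complex.star_def]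
        _ = conj' (∑ i, conj' (B a i) * B a' i) := by
            rw [map_sum]
            refine Finset.sum_congr rfl fun i _ => ?_
            rw [_root_.map_mul, Complex.conj_conj]
        _ = if a = a' then 1 else 0 := by
            rw [horth a a']
            split <;> simp
    have hU2 : Uᴴ * U = 1 := mul_eq_one_comm.mp hU1
    have h3 : (Uᴴ * U) i j = (1 : Matrix (Fin d × Fin d) (Fin d × Fin d) ℂ) i j := by
      rw [hU2]
    rw [Matrix.mul_apply] at h3
    calc (∑ a, B a i * conj' (B a j))
        = conj' (∑ a, Uᴴ i a * U a j) := by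
          rw [map_sum]
          refine Finset.sum_congr rfl fun a _ => ?_
          simp only [hU, Matrix.conjTranspose_apply, Matrix.of_apply, Complex.star_def]
          rw [_root_.map_mul, Complex.conj_conj, mul_comm]
      _ = if i = j then 1 else 0 := by
          rw [h3, Matrix.one_apply]
          split <;> simp
  refine ⟨a₀, fun a i => B a i, horth, hcomp, ?_⟩
  intro i j
  show B a₀ i * conj' (B a₀ j) = maxEnt d i j
  rw [hBa₀]
  exact hww i j

lemma tau_dec {d : ℕ} (hd : 2 ≤ d) (a₀ : Fin d × Fin d)
    (b : (Fin d × Fin d) → (Fin d × Fin d) → ℂ)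
    (hcompb : ∀ i j, (∑ a, b a i * conj' (b a j)) = if i = j then 1 else 0)
    (hmaxb : ∀ i j, b a₀ i * conj' (b a₀ j) = maxEnt d i j)
    (q : ℝ) (i j : Fin d × Fin d) :
    depolChoi d q i j = ∑ a, ((if a = a₀ then 1 - (1-1/(d:ℝ)^2)*q else q/(d:ℝ)^2 : ℝ) : ℂ)
      * (b a i * conj' (b a j)) := by
  classical
  have hdr : (2:ℝ) ≤ (d:ℝ) := by exact_mod_cast hd
  have hdne : (d:ℝ) ≠ 0 := by linarith
  have hsplit : ∀ a : Fin d × Fin d,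
      ((if a = a₀ then 1 - (1-1/(d:ℝ)^2)*q else q/(d:ℝ)^2 : ℝ) : ℂ)
      = (q:ℂ)/(d:ℂ)^2 + (if a = a₀ then ((1-q:ℝ):ℂ) else 0) := by
    intro a
    by_cases h : a = a₀
    · rw [if_pos h, if_pos h]
      have hr : (1 - (1-1/(d:ℝ)^2)*q) = q/(d:ℝ)^2 + (1-q) := by
        field_simp
        ring
      rw [hr]
      push_cast
      ring
    · rw [if_neg h, if_neg h]
      push_cast
      ring
  simp only [hsplit, add_mul, Finset.sum_add_distrib]
  rw [← Finset.mul_sum, hcompb i j]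
  have h2 : (∑ a, (if a = a₀ then ((1-q:ℝ):ℂ) else 0) * (b a i * conj' (b a j)))
      = ((1-q:ℝ):ℂ) * maxEnt d i j := by
    rw [Finset.sum_eq_single a₀]
    · rw [if_pos rfl, hmaxb]
    · intro a _ ha
      rw [if_neg ha, zero_mul]
    · intro h
      exact absurd (Finset.mem_univ a₀) h
  rw [h2]
  simp only [depolChoi, Matrix.add_apply, Matrix.smul_apply, smul_eq_mul, Matrix.one_apply]
  split_ifs <;> push_cast <;> ring

end CPFAux


set_option maxHeartbeats 4000000 in
/-- Helstrom limit for channel position finding with depolarizing channels and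
maximally entangled inputs. -/
theorem helstrom_CPF_depolarizing_entangled (d : ℕ) (hd : 2 ≤ d)
    (m : ℕ) (hm : 2 ≤ m) (qB qT : ℝ)
    (hB : qB ∈ Set.Icc (0:ℝ) 1) (hT : qT ∈ Set.Icc (0:ℝ) 1)
    (u : ℕ) (hu : 1 ≤ u) :
    helstrom (fun n : Fin m => tensorPow (tensorFam (fun k =>
        if k = n then depolChoi d qT else depolChoi d qB)) u)
      (fun _ => 1/(m:ℝ))
      = hErr m u ((1 - 1/(d:ℝ)^2) * qB) ((1 - 1/(d:ℝ)^2) * qT) := by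
  classical
  obtain ⟨hB0, hB1⟩ := hB
  obtain ⟨hT0, hT1⟩ := hT
  have hd0 : 0 < d := by omega
  haveI : Nonempty (Fin m) := ⟨⟨0, by omega⟩⟩
  have hdr : (2:ℝ) ≤ (d:ℝ) := by exact_mod_cast hd
  have hd2 : (1:ℝ) < (d:ℝ)^2 := by nlinarith
  have hd2pos : (0:ℝ) < (d:ℝ)^2 - 1 := by linarith
  obtain ⟨a₀, b, horthb, hcompb, hmaxb⟩ := CPFAux.exists_good_basis hd
  set aB : ℝ := (1 - 1/(d:ℝ)^2) * qB with haB
  set bT : ℝ := (1 - 1/(d:ℝ)^2) * qT with hbT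
  have hfracpos : (0:ℝ) < 1 - 1/(d:ℝ)^2 := by
    have h1 : 1/(d:ℝ)^2 < 1 := by
      rw [div_lt_one (by positivity)]
      exact hd2
    linarith
  have haB0 : 0 ≤ aB := mul_nonneg hfracpos.le hB0
  have hbT0 : 0 ≤ bT := mul_nonneg hfracpos.le hT0
  have haB1 : aB < 1 := by
    have h2 : (0:ℝ) < 1/(d:ℝ)^2 := by positivity
    have : aB ≤ (1 - 1/(d:ℝ)^2) * 1 := mul_le_mul_of_nonneg_left hB1 hfracpos.le
    rw [mul_one] at this
    linarith
  have hbT1 : bT < 1 := by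
    have h2 : (0:ℝ) < 1/(d:ℝ)^2 := by positivity
    have : bT ≤ (1 - 1/(d:ℝ)^2) * 1 := mul_le_mul_of_nonneg_left hT1 hfracpos.le
    rw [mul_one] at this
    linarith
  clear_value aB bT
  -- classical data
  set lam : ℝ → (Fin d × Fin d) → ℝ :=
    fun q a => if a = a₀ then 1 - (1-1/(d:ℝ)^2)*q else q/(d:ℝ)^2 with hlam
  set ket : ((Fin u × Fin m) → (Fin d × Fin d)) → (Fin u → Fin m → Fin d × Fin d) → ℂ :=
    fun y i => ∏ p : Fin u × Fin m, b (y p) (i p.1 p.2) with hket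
  set P : Fin m → ((Fin u × Fin m) → (Fin d × Fin d)) → ℝ :=
    fun n y => ∏ p : Fin u × Fin m, lam (if p.2 = n then qT else qB) (y p) with hP
  set pat : ((Fin u × Fin m) → (Fin d × Fin d)) → (Fin m → Fin u → Bool) :=
    fun y l k => decide (y (k,l) ≠ a₀) with hpat
  set Wt : (Fin m → Fin u → Bool) → ℕ := fun x => ∑ l, hamming (x l) with hWt
  set wsl : (Fin m → Fin u → Bool) → ℕ := fun x =>
    if aB ≤ bT then Finset.univ.sup (fun l => hamming (x l))
    else sInf (Set.range (fun l => hamming (x l))) with hwsl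
  set Pmax : ((Fin u × Fin m) → (Fin d × Fin d)) → ℝ := fun y =>
    (1/((d:ℝ)^2-1))^(Wt (pat y)) * CPFAux.gg aB bT u ((m-1)*u) (Wt (pat y)) (wsl (pat y))
    with hPmax
  -- orthonormality of the tensor kets
  have horth : ∀ y y' : (Fin u × Fin m) → (Fin d × Fin d),
      (∑ i : Fin u → Fin m → Fin d × Fin d, (starRingEnd ℂ) (ket y i) * ket y' i)
        = if y = y' then 1 else 0 := by
    intro y y'
    have h1 : ∀ i : Fin u → Fin m → Fin d × Fin d, (starRingEnd ℂ) (ket y i) * ket y' i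
        = ∏ k : Fin u, ∏ l : Fin m,
            ((starRingEnd ℂ) (b (y (k,l)) (i k l)) * b (y' (k,l)) (i k l)) := by
      intro i
      simp only [hket]
      rw [map_prod, ← Finset.prod_mul_distrib, Fintype.prod_prod_type]
    simp only [h1]
    rw [CPFAux.sum_prod_pi (F := fun (k : Fin u) (z : Fin m → Fin d × Fin d) =>
      ∏ l : Fin m, (starRingEnd ℂ) (b (y (k,l)) (z l)) * b (y' (k,l)) (z l))]
    have h2 : ∀ k : Fin u, (∑ z : Fin m → Fin d × Fin d,
        ∏ l : Fin m, (starRingEnd ℂ) (b (y (k,l)) (z l)) * b (y' (k,l)) (z l))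
        = ∏ l : Fin m, if y (k,l) = y' (k,l) then (1:ℂ) else 0 := by
      intro k
      rw [CPFAux.sum_prod_pi (F := fun (l : Fin m) (c : Fin d × Fin d) =>
        (starRingEnd ℂ) (b (y (k,l)) c) * b (y' (k,l)) c)]
      exact Finset.prod_congr rfl fun l _ => horthb _ _
    rw [Finset.prod_congr rfl fun k _ => h2 k]
    rw [← Fintype.prod_prod_type (f := fun p : Fin u × Fin m =>
      if y p = y' p then (1:ℂ) else 0)]
    exact CPFAux.prod_ite_eq_ite y y'
  -- completeness
  have hcomp : ∀ i j : Fin u → Fin m → Fin d × Fin d,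
      (∑ y : (Fin u × Fin m) → (Fin d × Fin d), ket y i * (starRingEnd ℂ) (ket y j))
        = if i = j then 1 else 0 := by
    intro i j
    have h1 : ∀ y : (Fin u × Fin m) → (Fin d × Fin d), ket y i * (starRingEnd ℂ) (ket y j)
        = ∏ p : Fin u × Fin m, (b (y p) (i p.1 p.2) * (starRingEnd ℂ) (b (y p) (j p.1 p.2))) := by
      intro y
      simp only [hket]
      rw [map_prod, ← Finset.prod_mul_distrib]
    simp only [h1]
    rw [CPFAux.sum_prod_pi (F := fun (p : Fin u × Fin m) (a : Fin d × Fin d) =>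
      b a (i p.1 p.2) * (starRingEnd ℂ) (b a (j p.1 p.2)))]
    rw [Finset.prod_congr rfl fun p _ => hcompb (i p.1 p.2) (j p.1 p.2)]
    by_cases hij : i = j
    · subst hij; simp
    · rw [if_neg hij]
      obtain ⟨p, hp⟩ : ∃ p : Fin u × Fin m, i p.1 p.2 ≠ j p.1 p.2 := by
        by_contra hc
        push_neg at hc
        apply hij
        funext k l
        exact hc (k, l)
      exact Finset.prod_eq_zero (Finset.mem_univ p) (if_neg hp)
  -- decomposition of the states
  have hdec : ∀ (n : Fin m) (i j : Fin u → Fin m → Fin d × Fin d),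
      (fun n : Fin m => tensorPow (tensorFam (fun k =>
        if k = n then depolChoi d qT else depolChoi d qB)) u) n i j
      = ∑ y : (Fin u × Fin m) → (Fin d × Fin d),
          ((P n y : ℝ) : ℂ) * (ket y i * (starRingEnd ℂ) (ket y j)) := by
    intro n i j
    show tensorPow (tensorFam (fun k => if k = n then depolChoi d qT else depolChoi d qB)) u i j = _
    have h0 : tensorPow (tensorFam (fun k =>
        if k = n then depolChoi d qT else depolChoi d qB)) u i j
        = ∏ p : Fin u × Fin m,
            depolChoi d (if p.2 = n then qT else qB) (i p.1 p.2) (j p.1 p.2) := by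
      rw [Fintype.prod_prod_type]
      show (∏ k : Fin u, ∏ l : Fin m,
        (if l = n then depolChoi d qT else depolChoi d qB) (i k l) (j k l)) = _
      refine Finset.prod_congr rfl fun k _ => Finset.prod_congr rfl fun l _ => ?_
      by_cases h : l = n
      · simp [h]
      · simp [h]
    rw [h0]
    have h1 : ∀ p : Fin u × Fin m,
        depolChoi d (if p.2 = n then qT else qB) (i p.1 p.2) (j p.1 p.2)
        = ∑ a, ((lam (if p.2 = n then qT else qB) a : ℝ) : ℂ)
            * (b a (i p.1 p.2) * (starRingEnd ℂ) (b a (j p.1 p.2)))  := by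
      intro p
      simp only [hlam]
      exact CPFAux.tau_dec hd a₀ b hcompb hmaxb _ _ _
    rw [Finset.prod_congr rfl fun p _ => h1 p]
    rw [Finset.prod_univ_sum, Fintype.piFinset_univ]
    refine Finset.sum_congr rfl fun y _ => ?_
    rw [Finset.prod_mul_distrib, Finset.prod_mul_distrib]
    simp only [hP, hket]
    push_cast
    rw [map_prod]
  -- combinatorial bounds
  have hamle : ∀ (x : Fin u → Bool), hamming x ≤ u := by
    intro x
    calc (Finset.univ.filter fun k => x k = true).card
        ≤ (Finset.univ : Finset (Fin u)).card := Finset.card_filter_le _ _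
      _ = u := by simp
  have hwW : ∀ (x : Fin m → Fin u → Bool) (n : Fin m), hamming (x n) ≤ Wt x := by
    intro x n
    simp only [hWt]
    exact Finset.single_le_sum (f := fun l => hamming (x l)) (fun _ _ => Nat.zero_le _) (Finset.mem_univ n)
  have herasesum : ∀ (x : Fin m → Fin u → Bool) (n : Fin m),
      hamming (x n) + ∑ l ∈ Finset.univ.erase n, hamming (x l) = Wt x := by
    intro x n
    simp only [hWt]
    exact Finset.add_sum_erase _ (fun l => hamming (x l)) (Finset.mem_univ n)
  have heraseu : ∀ n : Fin m, (∑ _l ∈ (Finset.univ : Finset (Fin m)).erase n, u) = (m-1)*u := by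
    intro n
    rw [Finset.sum_const, Finset.card_erase_of_mem (Finset.mem_univ n), Finset.card_univ,
      Fintype.card_fin, smul_eq_mul]
  have hWmu : ∀ (x : Fin m → Fin u → Bool) (n : Fin m), Wt x - hamming (x n) ≤ (m-1)*u := by
    intro x n
    have h1 := herasesum x n
    have h2 : ∑ l ∈ Finset.univ.erase n, hamming (x l)
        ≤ ∑ _l ∈ Finset.univ.erase n, u := Finset.sum_le_sum fun l _ => hamle _
    have h3 := heraseu n
    omega
  -- ws facts
  have hws_mem : ∀ x : Fin m → Fin u → Bool, ∃ n, hamming (x n) = wsl x := by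
    intro x
    by_cases hab : aB ≤ bT
    · have hw1 : wsl x = Finset.univ.sup (fun l => hamming (x l)) := by
        simp only [hwsl]; rw [if_pos hab]
      rw [hw1]
      obtain ⟨n, _, hn⟩ := Finset.exists_mem_eq_sup (Finset.univ : Finset (Fin m))
        Finset.univ_nonempty (fun l => hamming (x l))
      exact ⟨n, hn.symm⟩
    · have hw1 : wsl x = sInf (Set.range (fun l => hamming (x l))) := by
        simp only [hwsl]; rw [if_neg hab]
      rw [hw1]
      obtain ⟨n, hn⟩ := Nat.sInf_mem (Set.range_nonempty (fun l => hamming (x l)))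
      exact ⟨n, hn⟩
  have hws_le : ∀ (x : Fin m → Fin u → Bool) (n : Fin m),
      CPFAux.gg aB bT u ((m-1)*u) (Wt x) (hamming (x n))
        ≤ CPFAux.gg aB bT u ((m-1)*u) (Wt x) (wsl x) := by
    intro x n
    obtain ⟨n₀, hn₀⟩ := hws_mem x
    by_cases hab : aB ≤ bT
    · have hw1 : wsl x = Finset.univ.sup (fun l => hamming (x l)) := by
        simp only [hwsl]; rw [if_pos hab]
      refine CPFAux.gg_le haB0 hab hbT1 ?_ ?_ ?_ ?_
      · rw [hw1]; exact Finset.le_sup (f := fun l => hamming (x l)) (Finset.mem_univ n)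
      · rw [← hn₀]; exact hamle _
      · rw [← hn₀]; exact hwW x n₀
      · exact hWmu x n
    · push_neg at hab
      refine CPFAux.gg_ge hbT0 hab.le haB1 ?_ ?_ ?_ ?_
      · have hw1 : wsl x = sInf (Set.range (fun l => hamming (x l))) := by
          simp only [hwsl]; rw [if_neg (not_le.mpr hab)]
        rw [hw1]; exact Nat.sInf_le ⟨n, rfl⟩
      · exact hamle _
      · exact hwW x n
      · rw [← hn₀]; exact hWmu x n₀
  -- value of P
  have hblock : ∀ (c : ℝ) (y : (Fin u × Fin m) → (Fin d × Fin d)) (l : Fin m),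
      (∏ k : Fin u, lam c (y (k,l)))
        = (c/(d:ℝ)^2)^(hamming (pat y l)) * (1 - (1-1/(d:ℝ)^2)*c)^(u - hamming (pat y l)) := by
    intro c y l
    have hfc : ∀ k : Fin u, (pat y l k = true) ↔ ¬ (y (k,l) = a₀) := by
      intro k
      simp only [hpat]
      simp
    have hh : hamming (pat y l) = (Finset.univ.filter fun k : Fin u => ¬ (y (k,l) = a₀)).card := by
      unfold hamming
      congr 1
      exact Finset.filter_congr fun k _ => hfc k
    have hcards := Finset.card_filter_add_card_filter_not
      (s := (Finset.univ : Finset (Fin u))) (p := fun k : Fin u => y (k,l) = a₀)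
    have hucard : (Finset.univ : Finset (Fin u)).card = u := by simp
    have hcardpos : (Finset.univ.filter fun k : Fin u => (y (k,l) = a₀)).card
        = u - hamming (pat y l) := by
      rw [hh]
      omega
    have h4 : (∏ k : Fin u, lam c (y (k,l)))
        = ∏ k : Fin u, (if y (k,l) = a₀ then (1 - (1-1/(d:ℝ)^2)*c) else c/(d:ℝ)^2) := by
      refine Finset.prod_congr rfl fun k _ => ?_
      simp only [hlam]
    rw [h4, Finset.prod_ite, Finset.prod_const, Finset.prod_const, hcardpos, ← hh]
    ring
  have Pval : ∀ (n : Fin m) (y : (Fin u × Fin m) → (Fin d × Fin d)),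
      P n y = (1/((d:ℝ)^2-1))^(Wt (pat y))
        * CPFAux.gg aB bT u ((m-1)*u) (Wt (pat y)) (hamming (pat y n)) := by
    intro n y
    have h0 : P n y = ∏ l : Fin m, ∏ k : Fin u, lam (if l = n then qT else qB) (y (k,l)) := by
      simp only [hP]
      rw [Fintype.prod_prod_type (f := fun p : Fin u × Fin m =>
        lam (if p.2 = n then qT else qB) (y p))]
      exact Finset.prod_comm
    rw [h0]
    rw [Finset.prod_congr rfl fun l (_ : l ∈ Finset.univ) =>
      hblock (if l = n then qT else qB) y l]
    rw [← Finset.mul_prod_erase Finset.univ _ (Finset.mem_univ n)]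
    rw [if_pos rfl]
    have h2 : ∀ l ∈ Finset.univ.erase n,
        ((if l = n then qT else qB)/(d:ℝ)^2)^(hamming (pat y l))
          * (1 - (1-1/(d:ℝ)^2)*(if l = n then qT else qB))^(u - hamming (pat y l))
        = (qB/(d:ℝ)^2)^(hamming (pat y l)) * (1-aB)^(u - hamming (pat y l)) := by
      intro l hl
      rw [if_neg (Finset.mem_erase.mp hl).1, ← haB]
    rw [Finset.prod_congr rfl h2]
    rw [Finset.prod_mul_distrib, Finset.prod_pow_eq_pow_sum, Finset.prod_pow_eq_pow_sum]
    have e1 : ∑ l ∈ Finset.univ.erase n, hamming (pat y l)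
        = Wt (pat y) - hamming (pat y n) := by
      have := herasesum (pat y) n
      omega
    have e2 : ∑ l ∈ Finset.univ.erase n, (u - hamming (pat y l))
        = (m-1)*u - (Wt (pat y) - hamming (pat y n)) := by
      have h4 : ∀ l ∈ Finset.univ.erase n, (u - hamming (pat y l)) + hamming (pat y l) = u :=
        fun l _ => Nat.sub_add_cancel (hamle _)
      have h5 : (∑ l ∈ Finset.univ.erase n, ((u - hamming (pat y l)) + hamming (pat y l)))
          = ∑ _l ∈ Finset.univ.erase n, u := Finset.sum_congr rfl h4
      rw [Finset.sum_add_distrib] at h5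
      have h6 := heraseu n
      have h7 := herasesum (pat y) n
      omega
    rw [e1, e2]
    have hq : ∀ c : ℝ, c/(d:ℝ)^2 = ((1-1/(d:ℝ)^2)*c) * (1/((d:ℝ)^2-1)) := by
      intro c
      have h7 : (d:ℝ)^2 ≠ 0 := by positivity
      have h8 : (d:ℝ)^2 - 1 ≠ 0 := by linarith
      field_simp
    rw [hq qT, hq qB, ← hbT, ← haB, mul_pow, mul_pow]
    have e3 : (1/((d:ℝ)^2-1))^(hamming (pat y n))
        * (1/((d:ℝ)^2-1))^(Wt (pat y) - hamming (pat y n))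
        = (1/((d:ℝ)^2-1))^(Wt (pat y)) := by
      rw [← pow_add]
      congr 1
      have := hwW (pat y) n
      omega
    rw [CPFAux.gg, ← e3]
    ring
  have hle : ∀ (n : Fin m) (y : (Fin u × Fin m) → (Fin d × Fin d)), P n y ≤ Pmax y := by
    intro n y
    rw [Pval n y]
    simp only [hPmax]
    exact mul_le_mul_of_nonneg_left (hws_le (pat y) n) (pow_nonneg (by positivity) _)
  have hex : ∀ y : (Fin u × Fin m) → (Fin d × Fin d), ∃ n, P n y = Pmax y := by
    intro y
    obtain ⟨n, hn⟩ := hws_mem (pat y)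
    refine ⟨n, ?_⟩
    rw [Pval n y, hn]
  -- apply the general lemma
  rw [CPFAux.helstrom_eq_classical
    (ρ := fun n : Fin m => tensorPow (tensorFam (fun k =>
        if k = n then depolChoi d qT else depolChoi d qB)) u)
    ket P Pmax horth hcomp hdec hle hex]
  -- counting fibers
  have hdecide : ∀ (Pr : Prop) [Decidable Pr] (bb : Bool), (decide Pr = bb) ↔ (Pr ↔ bb = true) := by
    intro Pr _ bb
    cases bb <;> simp
  have hcount : ∀ x : Fin m → Fin u → Bool,
      ((Finset.univ.filter fun y : (Fin u × Fin m) → (Fin d × Fin d) => pat y = x).card : ℝ)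
        = ((d*d-1 : ℕ) : ℝ)^(Wt x) := by
    intro x
    have hset : Finset.univ.filter (fun y : (Fin u × Fin m) → (Fin d × Fin d) => pat y = x)
        = Fintype.piFinset (fun p : Fin u × Fin m =>
            if x p.2 p.1 then (Finset.univ : Finset (Fin d × Fin d)).erase a₀ else {a₀}) := by
      ext y
      simp only [Finset.mem_filter, Finset.mem_univ, true_and, Fintype.mem_piFinset]
      have hiff1 : pat y = x ↔ ∀ p : Fin u × Fin m, ((y p ≠ a₀) ↔ x p.2 p.1 = true) := by
        rw [funext_iff]
        constructor
        · intro h p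
          have h2 := congrFun (h p.2) p.1
          simp only [hpat] at h2
          rw [hdecide] at h2
          exact h2
        · intro h l
          funext k
          simp only [hpat]
          rw [hdecide]
          exact h (k, l)
      rw [hiff1]
      refine forall_congr' fun p => ?_
      by_cases hx : x p.2 p.1 = true
      · simp [hx, Finset.mem_erase]
      · simp [hx, Finset.mem_singleton]
    rw [hset, Fintype.card_piFinset]
    have hcardp : ∀ p : Fin u × Fin m,
        ((if x p.2 p.1 then (Finset.univ : Finset (Fin d × Fin d)).erase a₀
          else {a₀}).card : ℕ) = if x p.2 p.1 then d*d-1 else 1 := by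
      intro p
      by_cases hx : x p.2 p.1 = true
      · rw [if_pos hx, if_pos hx, Finset.card_erase_of_mem (Finset.mem_univ _),
          Finset.card_univ]
        simp
      · rw [if_neg hx, if_neg hx, Finset.card_singleton]
    rw [Finset.prod_congr rfl fun p _ => hcardp p]
    rw [Finset.prod_ite, Finset.prod_const, Finset.prod_const, one_pow, mul_one]
    have hfil : (Finset.univ.filter fun p : Fin u × Fin m => x p.2 p.1 = true).card = Wt x := by
      rw [Finset.card_filter, Fintype.sum_prod_type, Finset.sum_comm]
      simp only [hWt]
      refine Finset.sum_congr rfl fun l _ => ?_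
      unfold hamming
      rw [Finset.card_filter]
    push_cast
    rw [hfil]
  -- final sum identity
  have hsum_eq : (∑ y : (Fin u × Fin m) → (Fin d × Fin d), Pmax y)
      = ∑ x : Fin m → Fin u → Bool, CPFAux.gg aB bT u ((m-1)*u) (Wt x) (wsl x) := by
    rw [← Finset.sum_fiberwise Finset.univ pat Pmax]
    refine Finset.sum_congr rfl fun x _ => ?_
    have h2 : ∀ y ∈ Finset.univ.filter
        (fun y : (Fin u × Fin m) → (Fin d × Fin d) => pat y = x),
        Pmax y = (1/((d:ℝ)^2-1))^(Wt x) * CPFAux.gg aB bT u ((m-1)*u) (Wt x) (wsl x) := by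
      intro y hy
      have hyx : pat y = x := (Finset.mem_filter.mp hy).2
      simp only [hPmax, hyx]
    rw [Finset.sum_congr rfl h2, Finset.sum_const, nsmul_eq_mul, hcount x]
    have hD : ((d*d-1 : ℕ) : ℝ) = (d:ℝ)^2 - 1 := by
      have h1 : 2*2 ≤ d*d := Nat.mul_le_mul hd hd
      push_cast [Nat.cast_sub (by omega : 1 ≤ d*d)]
      ring
    rw [hD, ← mul_assoc, ← mul_pow]
    have hone : ((d:ℝ)^2 - 1) * (1/((d:ℝ)^2-1)) = 1 := by
      field_simp
    rw [hone, one_pow, one_mul]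
  rw [hsum_eq]
  -- match with hErr
  by_cases hab : aB ≤ bT
  · simp only [hErr, CPFAux.gg, hWt, hwsl, hab, if_true]
  · simp only [hErr, CPFAux.gg, hWt, hwsl, hab, if_false]
end
end

section
/- Helstrom limit for channel position finding with depolarizing channels and pure unentangled inputs: Let d ≥ 2 and let φ be any rank-one orthogonal projection (pure state) on ℂ^d. For q ∈ [0,1] set τ_q = q·(1/d)·I_d + (1−q)·φ, a density matrix on ℂ^d. Let m ≥ 2 and q_B, q_T ∈ [0,1], and for n = 0,…,m−1 define ρ_n = τ_{c_0} ⊗ τ_{c_1} ⊗ … ⊗ τ_{c_{m−1}} on (ℂ^d)^{⊗m}, where c_n = q_T and c_k = q_B for k ≠ n. Then for every u ≥ 1, the Helstrom error probability of the equiprobable states (ρ_n^{⊗u})_{n=0}^{m−1} equals h_m^u((1 − d^{−1})·q_B, (1 − d^{−1})·q_T). -/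
open Matrix BigOperators Finset ComplexOrder

noncomputable section

set_option linter.unusedVariables false
set_option linter.unusedSectionVars false
set_option maxHeartbeats 1600000

section TensorLemmas
variable {m : ℕ} {ι : Type*} [Fintype ι] [DecidableEq ι]

lemma tensorFam_mul (A B : Fin m → Matrix ι ι ℂ) :
    tensorFam (fun k => A k * B k) = tensorFam A * tensorFam B := by
  funext i j
  simp only [tensorFam, Matrix.mul_apply, Finset.prod_univ_sum]
  rw [Fintype.piFinset_univ]
  exact Finset.sum_congr rfl fun x _ => Finset.prod_mul_distrib

lemma tensorFam_conjTranspose (A : Fin m → Matrix ι ι ℂ) :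
    (tensorFam A)ᴴ = tensorFam (fun k => (A k)ᴴ) := by
  funext i j
  simp [tensorFam, Matrix.conjTranspose_apply, map_prod]

lemma tensorFam_one : tensorFam (fun _ : Fin m => (1 : Matrix ι ι ℂ)) = 1 := by
  funext i j
  simp only [tensorFam, Matrix.one_apply]
  by_cases h : i = j
  · subst h; simp
  · rw [if_neg h]
    obtain ⟨k, hk⟩ := Function.ne_iff.mp h
    exact Finset.prod_eq_zero (Finset.mem_univ k) (by simp [hk])

lemma tensorFam_diagonal (g : Fin m → ι → ℂ) :
    tensorFam (fun k => Matrix.diagonal (g k)) =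
      Matrix.diagonal (fun j => ∏ k, g k (j k)) := by
  funext i j
  simp only [tensorFam, Matrix.diagonal_apply]
  by_cases h : i = j
  · subst h; simp
  · rw [if_neg h]
    obtain ⟨k, hk⟩ := Function.ne_iff.mp h
    exact Finset.prod_eq_zero (Finset.mem_univ k) (by simp [hk])

end TensorLemmas

section HelstromLemmas
variable {ι : Type*} [Fintype ι] [DecidableEq ι] {m : ℕ}

lemma helstrom_conj (V : Matrix ι ι ℂ) (hV1 : Vᴴ * V = 1) (hV2 : V * Vᴴ = 1)
    (ρ : Fin m → Matrix ι ι ℂ) (p : Fin m → ℝ) :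
    helstrom ρ p = helstrom (fun n => Vᴴ * ρ n * V) p := by
  unfold helstrom
  congr 1
  congr 1
  ext x
  constructor
  · rintro ⟨M, hpsd, hsum, hx⟩
    refine ⟨fun n => Vᴴ * M n * V, fun n => (hpsd n).conjTranspose_mul_mul_same V, ?_, ?_⟩
    · rw [← Finset.sum_mul, ← Finset.mul_sum, hsum, mul_one, hV1]
    · rw [hx]
      refine Finset.sum_congr rfl fun n _ => ?_
      congr 2
      rw [show Vᴴ * M n * V * (Vᴴ * ρ n * V) = Vᴴ * (M n * ((V * Vᴴ) * ρ n)) * V by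
        noncomm_ring, hV2, one_mul, Matrix.trace_mul_cycle, ← mul_assoc, hV2, one_mul]
  · rintro ⟨M, hpsd, hsum, hx⟩
    refine ⟨fun n => V * M n * Vᴴ, fun n => ?_, ?_, ?_⟩
    · simpa using (hpsd n).conjTranspose_mul_mul_same Vᴴ
    · rw [← Finset.sum_mul, ← Finset.mul_sum, hsum, mul_one, hV2]
    · rw [hx]
      refine Finset.sum_congr rfl fun n _ => ?_
      congr 2
      rw [show M n * (Vᴴ * ρ n * V) = (M n * Vᴴ * ρ n) * V by noncomm_ring,
        Matrix.trace_mul_comm,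
        show V * (M n * Vᴴ * ρ n) = (V * M n * Vᴴ) * ρ n by noncomm_ring]

lemma psd_diag_re_nonneg {M : Matrix ι ι ℂ} (h : M.PosSemidef) (x : ι) :
    0 ≤ (M x x).re := by
  have h2 := h.diag_nonneg (i := x)
  simpa using (Complex.le_def.mp h2).1

lemma helstrom_diagonal [Nonempty ι] (hm : 0 < m) (r : Fin m → ι → ℝ)
    (hr : ∀ n x, 0 ≤ r n x) (p : Fin m → ℝ) (hp : ∀ n, 0 ≤ p n) :
    helstrom (fun n => Matrix.diagonal (fun x => (r n x : ℂ))) p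
      = 1 - ∑ x : ι, (Finset.univ.sup'
          (Finset.univ_nonempty_iff.mpr ⟨⟨0, hm⟩⟩) fun n => p n * r n x) := by
  haveI : NeZero m := ⟨hm.ne'⟩
  set hne : (Finset.univ : Finset (Fin m)).Nonempty := Finset.univ_nonempty_iff.mpr ⟨⟨0, hm⟩⟩
  unfold helstrom
  congr 1
  apply IsGreatest.csSup_eq
  constructor
  · -- membership: the maximum-likelihood projective measurement
    have hch : ∀ x : ι, ∃ n : Fin m, Finset.univ.sup' hne (fun n => p n * r n x)
        = p n * r n x := by
      intro x
      obtain ⟨n, -, hn⟩ := Finset.exists_mem_eq_sup' hne (fun n => p n * r n x)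
      exact ⟨n, hn⟩
    choose n0 hn0 using hch
    refine ⟨fun n => Matrix.diagonal (fun x => if n0 x = n then (1:ℂ) else 0),
      fun n => Matrix.PosSemidef.diagonal (fun x => by dsimp only; split <;> simp), ?_, ?_⟩
    · funext i j
      simp only [Matrix.sum_apply, Matrix.diagonal_apply, Matrix.one_apply]
      by_cases h : i = j
      · subst h; simp
      · simp [h]
    · have key : ∀ n : Fin m, ((Matrix.diagonal (fun x => if n0 x = n then (1:ℂ) else 0)
          * Matrix.diagonal (fun x => ((r n x : ℝ) : ℂ))).trace).re
          = ∑ x, (if n0 x = n then r n x else 0) := by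
        intro n
        rw [Matrix.diagonal_mul_diagonal, Matrix.trace_diagonal, Complex.re_sum]
        refine Finset.sum_congr rfl fun x _ => ?_
        split <;> simp
      simp only [key, Finset.mul_sum]
      rw [Finset.sum_comm]
      refine Finset.sum_congr rfl fun x _ => ?_
      rw [hn0 x]
      simp only [mul_ite, mul_zero]
      simp
  · rintro y ⟨M, hpsd, hsum, hy⟩
    have tr_eq : ∀ n, ((M n * Matrix.diagonal (fun x => ((r n x : ℝ) : ℂ))).trace).re
        = ∑ x, (M n x x).re * r n x := by
      intro n
      rw [Matrix.trace, Complex.re_sum]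
      refine Finset.sum_congr rfl fun x _ => ?_
      simp [Matrix.diag_apply, Matrix.mul_diagonal, Complex.mul_re]
    have hcol : ∀ x : ι, ∑ n, (M n x x).re = 1 := by
      intro x
      have h1 : (∑ n, M n) x x = (1 : Matrix ι ι ℂ) x x := by rw [hsum]
      rw [Matrix.sum_apply, Matrix.one_apply_eq] at h1
      have := congrArg Complex.re h1
      rwa [Complex.re_sum] at this
    rw [hy]
    simp only [tr_eq, Finset.mul_sum]
    rw [Finset.sum_comm]
    refine Finset.sum_le_sum fun x _ => ?_
    calc ∑ n, p n * ((M n x x).re * r n x)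
        = ∑ n, (p n * r n x) * (M n x x).re := by
          refine Finset.sum_congr rfl fun n _ => by ring
      _ ≤ ∑ n, (Finset.univ.sup' hne fun n => p n * r n x) * (M n x x).re := by
          refine Finset.sum_le_sum fun n _ => ?_
          exact mul_le_mul_of_nonneg_right
            (Finset.le_sup' (fun n => p n * r n x) (Finset.mem_univ n))
            (psd_diag_re_nonneg (hpsd n) x)
      _ = (Finset.univ.sup' hne fun n => p n * r n x) * ∑ n, (M n x x).re := by
          rw [Finset.mul_sum]
      _ = _ := by rw [hcol x, mul_one]

end HelstromLemmas

lemma proj_spectral {d : ℕ} [NeZero d] (φ : Matrix (Fin d) (Fin d) ℂ)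
    (hherm : φᴴ = φ) (hproj : φ * φ = φ) (htr : φ.trace = 1) :
    ∃ (U : Matrix (Fin d) (Fin d) ℂ) (i0 : Fin d),
      Uᴴ * U = 1 ∧ U * Uᴴ = 1 ∧
      φ = U * Matrix.diagonal (fun i => if i = i0 then (1:ℂ) else 0) * Uᴴ := by
  have hA : φ.IsHermitian := hherm
  set U : Matrix (Fin d) (Fin d) ℂ := (hA.eigenvectorUnitary : Matrix (Fin d) (Fin d) ℂ)
  have hU1 : Uᴴ * U = 1 := by
    rw [← Matrix.star_eq_conjTranspose]
    exact (Unitary.mem_iff.mp hA.eigenvectorUnitary.2).1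
  have hU2 : U * Uᴴ = 1 := by
    rw [← Matrix.star_eq_conjTranspose]
    exact (Unitary.mem_iff.mp hA.eigenvectorUnitary.2).2
  have hspec : φ = U * Matrix.diagonal (RCLike.ofReal ∘ hA.eigenvalues) * Uᴴ := by
    rw [← Matrix.star_eq_conjTranspose]
    exact hA.spectral_theorem
  set ev := hA.eigenvalues with hev
  set D : Matrix (Fin d) (Fin d) ℂ := Matrix.diagonal (RCLike.ofReal ∘ ev) with hD
  -- D is idempotent
  have hDD : D * D = D := by
    have h1 : (U * D * Uᴴ) * (U * D * Uᴴ) = U * D * Uᴴ := by rw [← hspec]; exact hproj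
    have h2 : U * (D * D) * Uᴴ = U * D * Uᴴ := by
      calc U * (D * D) * Uᴴ = (U * D) * (Uᴴ * U) * (D * Uᴴ) := by rw [hU1]; noncomm_ring
        _ = (U * D * Uᴴ) * (U * D * Uᴴ) := by noncomm_ring
        _ = U * D * Uᴴ := h1
    calc D * D = (Uᴴ * U) * (D * D) * (Uᴴ * U) := by rw [hU1]; noncomm_ring
      _ = Uᴴ * (U * (D * D) * Uᴴ) * U := by noncomm_ring
      _ = Uᴴ * (U * D * Uᴴ) * U := by rw [h2]
      _ = (Uᴴ * U) * D * (Uᴴ * U) := by noncomm_ring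
      _ = D := by rw [hU1]; noncomm_ring
  have hev01 : ∀ i, ev i = 0 ∨ ev i = 1 := by
    intro i
    have h0 := congrFun (congrFun hDD i) i
    simp only [hD, Matrix.diagonal_mul_diagonal, Matrix.diagonal_apply_eq,
      Function.comp_apply] at h0
    have h' : ev i * ev i = ev i := by exact_mod_cast h0
    have : ev i * (ev i - 1) = 0 := by ring_nf; linarith
    rcases mul_eq_zero.mp this with h | h
    · exact Or.inl h
    · exact Or.inr (by linarith)
  -- trace of D is 1
  have htrD : ∑ i, ev i = 1 := by
    have h1 : D.trace = 1 := by
      have : φ.trace = (U * D * Uᴴ).trace := by rw [← hspec]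
      rw [htr, Matrix.trace_mul_cycle, hU1, Matrix.one_mul] at this
      exact this.symm
    have h2 : D.trace = ((∑ i, ev i : ℝ) : ℂ) := by
      simp [hD, Matrix.trace_diagonal]
    rw [h2] at h1
    exact_mod_cast h1
  -- exactly one eigenvalue equals 1
  have hs : (Finset.univ.filter fun i => ev i = 1).card = 1 := by
    have : ∑ i, ev i = ((Finset.univ.filter fun i => ev i = 1).card : ℝ) := by
      rw [Finset.sum_filter_add_sum_filter_not Finset.univ (fun i => ev i = 1) ev |>.symm]
      rw [Finset.sum_congr rfl (fun i hi => (Finset.mem_filter.mp hi).2),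
        Finset.sum_const, nsmul_eq_mul, mul_one]
      have : ∑ i ∈ Finset.univ.filter (fun i => ¬ ev i = 1), ev i = 0 := by
        refine Finset.sum_eq_zero fun i hi => ?_
        rcases hev01 i with h | h
        · exact h
        · exact absurd h (Finset.mem_filter.mp hi).2
      rw [this, add_zero]
    rw [htrD] at this
    exact_mod_cast this.symm
  obtain ⟨i0, hi0⟩ := Finset.card_eq_one.mp hs
  have hev_eq : ∀ i, ev i = if i = i0 then 1 else 0 := by
    intro i
    by_cases h : i = i0
    · subst h
      have : i ∈ Finset.univ.filter fun j => ev j = 1 := by rw [hi0]; simp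
      simpa using (Finset.mem_filter.mp this).2
    · rw [if_neg h]
      rcases hev01 i with h' | h'
      · exact h'
      · exfalso
        have : i ∈ Finset.univ.filter fun j => ev j = 1 := by simp [h']
        rw [hi0, Finset.mem_singleton] at this
        exact h this
  refine ⟨U, i0, hU1, hU2, ?_⟩
  have hfun : (RCLike.ofReal ∘ ev : Fin d → ℂ) = fun i => if i = i0 then 1 else 0 := by
    funext i
    simp only [Function.comp_apply, hev_eq i]
    split <;> simp
  rw [hspec, hD, hfun]

def Rw (u : ℕ) (A B C E : ℝ) {m : ℕ} (w : Fin m → ℕ) (n : Fin m) : ℝ :=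
  ∏ l, (if l = n then A^(w l) * B^(u - w l) else C^(w l) * E^(u - w l))

lemma sum_nat_sub {α : Type*} [DecidableEq α] (s : Finset α) (w : α → ℕ) (u : ℕ)
    (h : ∀ l ∈ s, w l ≤ u) : ∑ l ∈ s, (u - w l) = s.card * u - ∑ l ∈ s, w l := by
  induction s using Finset.induction_on with
  | empty => simp
  | insert a s' ha ih =>
    rw [Finset.sum_insert ha, Finset.sum_insert ha, Finset.card_insert_of_notMem ha,
      ih (fun l hl => h l (Finset.mem_insert_of_mem hl))]
    have h4 : ∑ l ∈ s', w l ≤ s'.card * u := by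
      calc ∑ l ∈ s', w l ≤ ∑ _l ∈ s', u :=
            Finset.sum_le_sum (fun l hl => h l (Finset.mem_insert_of_mem hl))
        _ = s'.card * u := by rw [Finset.sum_const, smul_eq_mul]
    have := h a (Finset.mem_insert_self a s')
    rw [add_mul, one_mul]
    omega

lemma pair_le {A B C E : ℝ} (hA : 0 ≤ A) (hB : 0 ≤ B) (hC : 0 ≤ C) (hE : 0 ≤ E)
    (h : B * C ≤ A * E) {u a b : ℕ} (hab : a ≤ b) (hbu : b ≤ u) :
    (A^a * B^(u-a)) * (C^b * E^(u-b)) ≤ (A^b * B^(u-b)) * (C^a * E^(u-a)) := by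
  set t := b - a with ht
  have hb : b = a + t := by omega
  have hua : u - a = (u - b) + t := by omega
  have hX : (0:ℝ) ≤ A^a * B^(u-b) * C^a * E^(u-b) := by positivity
  calc (A^a * B^(u-a)) * (C^b * E^(u-b))
      = (B*C)^t * (A^a * B^(u-b) * C^a * E^(u-b)) := by
        rw [hua, hb, pow_add, pow_add, mul_pow]; ring
    _ ≤ (A*E)^t * (A^a * B^(u-b) * C^a * E^(u-b)) := by
        exact mul_le_mul_of_nonneg_right (pow_le_pow_left₀ (by positivity) h t) hX
    _ = (A^b * B^(u-b)) * (C^a * E^(u-a)) := by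
        rw [hua, hb, pow_add, pow_add, mul_pow]; ring

lemma Rw_le {m u : ℕ} {A B C E : ℝ} (hA : 0 ≤ A) (hB : 0 ≤ B) (hC : 0 ≤ C) (hE : 0 ≤ E)
    (h : B * C ≤ A * E) (w : Fin m → ℕ) (hw : ∀ l, w l ≤ u) (n ns : Fin m)
    (hns : w n ≤ w ns) : Rw u A B C E w n ≤ Rw u A B C E w ns := by
  by_cases hnn : n = ns
  · subst hnn; exact le_refl _
  · unfold Rw
    rw [← Finset.prod_mul_prod_compl ({n, ns} : Finset (Fin m)),
        ← Finset.prod_mul_prod_compl ({n, ns} : Finset (Fin m))]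
    have hP : (0:ℝ) ≤ ∏ l ∈ ({n, ns} : Finset (Fin m))ᶜ,
        (if l = n then A^(w l) * B^(u - w l) else C^(w l) * E^(u - w l)) := by
      refine Finset.prod_nonneg fun l _ => ?_
      split <;> positivity
    have hcongr : ∀ nn : Fin m, ∏ l ∈ ({n, ns} : Finset (Fin m))ᶜ,
        (if l = nn then A^(w l) * B^(u - w l) else C^(w l) * E^(u - w l))
        = ∏ l ∈ ({n, ns} : Finset (Fin m))ᶜ, C^(w l) * E^(u - w l) → True := fun _ _ => trivial
    have hsame : ∀ nn ∈ ({n, ns} : Finset (Fin m)), ∀ l ∈ ({n, ns} : Finset (Fin m))ᶜ,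
        (if l = nn then A^(w l) * B^(u - w l) else C^(w l) * E^(u - w l))
        = C^(w l) * E^(u - w l) := by
      intro nn hnn l hl
      rw [Finset.mem_compl, Finset.mem_insert, Finset.mem_singleton] at hl
      push_neg at hl
      rw [Finset.mem_insert, Finset.mem_singleton] at hnn
      rcases hnn with rfl | rfl
      · rw [if_neg hl.1]
      · rw [if_neg hl.2]
    rw [Finset.prod_congr rfl (hsame n (by simp)), Finset.prod_congr rfl (hsame ns (by simp))]
    refine mul_le_mul_of_nonneg_right ?_ (Finset.prod_nonneg fun l _ => by positivity)
    rw [Finset.prod_pair hnn, Finset.prod_pair hnn, if_pos rfl, if_pos rfl,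
      if_neg (Ne.symm hnn), if_neg hnn]
    calc (A^(w n) * B^(u - w n)) * (C^(w ns) * E^(u - w ns))
        ≤ (A^(w ns) * B^(u - w ns)) * (C^(w n) * E^(u - w n)) :=
          pair_le hA hB hC hE h hns (hw ns)
      _ = (C^(w n) * E^(u - w n)) * (A^(w ns) * B^(u - w ns)) := by ring

lemma Rw_eq {m u : ℕ} (A B C E : ℝ) (w : Fin m → ℕ) (hw : ∀ l, w l ≤ u) (ns : Fin m) :
    Rw u A B C E w ns = (A^(w ns) * B^(u - w ns))
      * (C^((∑ l, w l) - w ns) * E^((m-1)*u - ((∑ l, w l) - w ns))) := by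
  unfold Rw
  rw [← Finset.prod_erase_mul _ _ (Finset.mem_univ ns), if_pos rfl]
  have h1 : ∀ l ∈ Finset.univ.erase ns,
      (if l = ns then A^(w l) * B^(u - w l) else C^(w l) * E^(u - w l))
      = C^(w l) * E^(u - w l) := by
    intro l hl
    rw [if_neg (Finset.mem_erase.mp hl).1]
  rw [Finset.prod_congr rfl h1, Finset.prod_mul_distrib,
    Finset.prod_pow_eq_pow_sum, Finset.prod_pow_eq_pow_sum]
  have hW : ∑ l ∈ Finset.univ.erase ns, w l = (∑ l, w l) - w ns := by
    have := Finset.add_sum_erase Finset.univ w (Finset.mem_univ ns)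
    omega
  have hE : ∑ l ∈ Finset.univ.erase ns, (u - w l) = (m-1)*u - ((∑ l, w l) - w ns) := by
    have hc : (Finset.univ.erase ns).card = m - 1 := by
      rw [Finset.card_erase_of_mem (Finset.mem_univ ns), Finset.card_univ, Fintype.card_fin]
    have hsum := Finset.add_sum_erase Finset.univ w (Finset.mem_univ ns)
    rw [sum_nat_sub _ w u (fun l _ => hw l), hc, hW]
  rw [hW, hE]
  ring

def gR (d : ℕ) (i0 : Fin d) (c : ℝ) : Fin d → ℝ :=
  fun i => c * (1/(d:ℝ)) + (1-c) * (if i = i0 then 1 else 0)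

lemma gR_nonneg {d : ℕ} (hd : 2 ≤ d) (i0 : Fin d) {c : ℝ} (hc0 : 0 ≤ c) (hc1 : c ≤ 1)
    (i : Fin d) : 0 ≤ gR d i0 c i := by
  have h3 : (0:ℝ) < d := by positivity
  have t1 : 0 ≤ c * (1/(d:ℝ)) := mul_nonneg hc0 (by positivity)
  unfold gR
  split
  · nlinarith
  · nlinarith

lemma const_mul_sup' {α : Type*} (s : Finset α) (H : s.Nonempty) (a : ℝ) (ha : 0 ≤ a)
    (f : α → ℝ) : s.sup' H (fun i => a * f i) = a * s.sup' H f := by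
  apply le_antisymm
  · exact Finset.sup'_le H _ fun i hi => mul_le_mul_of_nonneg_left (Finset.le_sup' f hi) ha
  · obtain ⟨i, hi, hsup⟩ := Finset.exists_mem_eq_sup' H f
    rw [hsup]
    exact Finset.le_sup' (fun i => a * f i) hi

lemma prod_gR {d u : ℕ} (hd : 2 ≤ d) (i0 : Fin d) (c : ℝ) (y : Fin u → Fin d) :
    ∏ k, gR d i0 c (y k)
      = (c/(d:ℝ))^((Finset.univ.filter fun k => y k ≠ i0).card)
        * (1-(1-1/(d:ℝ))*c)^(u - (Finset.univ.filter fun k => y k ≠ i0).card) := by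
  have hd0 : (0:ℝ) < d := by positivity
  rw [← Finset.prod_filter_mul_prod_filter_not Finset.univ (fun k => y k ≠ i0)]
  have h1 : ∀ k ∈ Finset.univ.filter (fun k => y k ≠ i0), gR d i0 c (y k) = c/(d:ℝ) := by
    intro k hk
    have := (Finset.mem_filter.mp hk).2
    simp only [gR, if_neg this]
    ring
  have h2 : ∀ k ∈ Finset.univ.filter (fun k => ¬ y k ≠ i0), gR d i0 c (y k)
      = 1-(1-1/(d:ℝ))*c := by
    intro k hk
    have := (Finset.mem_filter.mp hk).2
    push_neg at this
    simp only [gR, if_pos this]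
    ring
  rw [Finset.prod_congr rfl h1, Finset.prod_congr rfl h2, Finset.prod_const, Finset.prod_const]
  congr 1
  rw [Finset.filter_not, Finset.card_sdiff_of_subset (Finset.filter_subset _ _), Finset.card_univ,
    Fintype.card_fin]

lemma Rw_le' {m u : ℕ} {A B C E : ℝ} (hA : 0 ≤ A) (hB : 0 ≤ B) (hC : 0 ≤ C) (hE : 0 ≤ E)
    (h : A * E ≤ B * C) (w : Fin m → ℕ) (hw : ∀ l, w l ≤ u) (n ns : Fin m)
    (hns : w ns ≤ w n) : Rw u A B C E w n ≤ Rw u A B C E w ns := by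
  by_cases hnn : n = ns
  · subst hnn; exact le_refl _
  · unfold Rw
    rw [← Finset.prod_mul_prod_compl ({n, ns} : Finset (Fin m)),
        ← Finset.prod_mul_prod_compl ({n, ns} : Finset (Fin m))]
    have hsame : ∀ nn ∈ ({n, ns} : Finset (Fin m)), ∀ l ∈ ({n, ns} : Finset (Fin m))ᶜ,
        (if l = nn then A^(w l) * B^(u - w l) else C^(w l) * E^(u - w l))
        = C^(w l) * E^(u - w l) := by
      intro nn hnn' l hl
      rw [Finset.mem_compl, Finset.mem_insert, Finset.mem_singleton] at hl
      push_neg at hl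
      rw [Finset.mem_insert, Finset.mem_singleton] at hnn'
      rcases hnn' with rfl | rfl
      · rw [if_neg hl.1]
      · rw [if_neg hl.2]
    rw [Finset.prod_congr rfl (hsame n (by simp)), Finset.prod_congr rfl (hsame ns (by simp))]
    refine mul_le_mul_of_nonneg_right ?_ (Finset.prod_nonneg fun l _ => by positivity)
    rw [Finset.prod_pair hnn, Finset.prod_pair hnn, if_pos rfl, if_pos rfl,
      if_neg (Ne.symm hnn), if_neg hnn]
    calc (A^(w n) * B^(u - w n)) * (C^(w ns) * E^(u - w ns))
        = (C^(w ns) * E^(u - w ns)) * (A^(w n) * B^(u - w n)) := by ring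
      _ ≤ (C^(w n) * E^(u - w n)) * (A^(w ns) * B^(u - w ns)) :=
          pair_le hC hE hA hB (by linarith [mul_comm A E, mul_comm C B] :
            E * A ≤ C * B) hns (hw n)

lemma fiber_card {d m u : ℕ} (hd : 2 ≤ d) (i0 : Fin d) (x : Fin m → Fin u → Bool) :
    (Finset.univ.filter fun j : Fin u → Fin m → Fin d =>
        (fun l k => decide (j k l ≠ i0)) = x).card
      = (d-1)^(∑ l, hamming (x l)) := by
  have hset : (Finset.univ.filter fun j : Fin u → Fin m → Fin d =>
        (fun l k => decide (j k l ≠ i0)) = x)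
      = Fintype.piFinset (fun k : Fin u => Fintype.piFinset (fun l : Fin m =>
          if x l k then Finset.univ.erase i0 else {i0})) := by
    ext j
    simp only [Finset.mem_filter, Finset.mem_univ, true_and, Fintype.mem_piFinset]
    constructor
    · intro h k l
      have h2 : decide (j k l ≠ i0) = x l k := congrFun (congrFun h l) k
      cases hb : x l k
      · rw [hb, decide_eq_false_iff_not, not_not] at h2
        rw [if_neg (by simp)]
        simp [h2]
      · rw [hb, decide_eq_true_eq] at h2
        rw [if_pos (by simp)]
        exact Finset.mem_erase.mpr ⟨h2, Finset.mem_univ _⟩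
    · intro h
      funext l k
      have h2 := h k l
      cases hb : x l k
      · rw [hb] at h2
        rw [if_neg (by simp)] at h2
        rw [Finset.mem_singleton] at h2
        simp [h2, hb]
      · rw [hb] at h2
        rw [if_pos (by simp)] at h2
        simp [(Finset.mem_erase.mp h2).1, hb]
  rw [hset, Fintype.card_piFinset]
  have hcard : ∀ k l, ((if x l k then Finset.univ.erase i0 else {i0}) : Finset (Fin d)).card
      = if x l k then d - 1 else 1 := by
    intro k l
    cases hb : x l k
    · simp
    · simp [Finset.card_erase_of_mem]
  calc ∏ k : Fin u, (Fintype.piFinset (fun l : Fin m =>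
          if x l k then Finset.univ.erase i0 else {i0})).card
      = ∏ k : Fin u, ∏ l : Fin m, (if x l k then d - 1 else 1) := by
        refine Finset.prod_congr rfl fun k _ => ?_
        rw [Fintype.card_piFinset]
        exact Finset.prod_congr rfl fun l _ => hcard k l
    _ = ∏ l : Fin m, ∏ k : Fin u, (if x l k then d - 1 else 1) := Finset.prod_comm
    _ = ∏ l : Fin m, (d-1)^(hamming (x l)) := by
        refine Finset.prod_congr rfl fun l _ => ?_
        rw [← Finset.prod_filter_mul_prod_filter_not Finset.univ (fun k => x l k = true)]
        have e1 : ∀ k ∈ Finset.univ.filter (fun k => x l k = true),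
            (if x l k then d - 1 else 1) = d - 1 := by
          intro k hk; rw [if_pos (Finset.mem_filter.mp hk).2]
        have e2 : ∀ k ∈ Finset.univ.filter (fun k => ¬ x l k = true),
            (if x l k then d - 1 else 1) = 1 := by
          intro k hk
          have := (Finset.mem_filter.mp hk).2
          rw [if_neg this]
        rw [Finset.prod_congr rfl e1, Finset.prod_congr rfl e2, Finset.prod_const,
          Finset.prod_const, one_pow, mul_one]
        rfl
    _ = (d-1)^(∑ l, hamming (x l)) := Finset.prod_pow_eq_pow_sum _ _ _

lemma master (d : ℕ) (hd : 2 ≤ d) (i0 : Fin d) (m : ℕ) (u : ℕ)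
    (qB qT : ℝ) (hB : qB ∈ Set.Icc (0:ℝ) 1) (hT : qT ∈ Set.Icc (0:ℝ) 1)
    (hne : (Finset.univ : Finset (Fin m)).Nonempty) :
    ∑ j : Fin u → Fin m → Fin d, Finset.univ.sup' hne
        (fun n => (1/(m:ℝ)) * ∏ k, ∏ l, gR d i0 (if l = n then qT else qB) (j k l))
      = (1/(m:ℝ)) * ∑ x : Fin m → Fin u → Bool,
        (let w : Fin m → ℕ := fun l => hamming (x l)
         let W : ℕ := ∑ l, w l
         let ws : ℕ := if (1-1/(d:ℝ))*qB ≤ (1-1/(d:ℝ))*qT then Finset.univ.sup w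
           else sInf (Set.range w)
         ((1-1/(d:ℝ))*qT)^ws * (1-((1-1/(d:ℝ))*qT))^(u-ws)
           * (((1-1/(d:ℝ))*qB)^(W-ws) * (1-((1-1/(d:ℝ))*qB))^((m-1)*u-(W-ws)))) := by
  haveI : Nonempty (Fin m) := ⟨hne.choose⟩
  have hd0 : (0:ℝ) < d := by positivity
  have hd1 : (1:ℝ) ≤ (d:ℝ) - 1 := by
    have : (2:ℝ) ≤ d := by exact_mod_cast hd
    linarith
  set δ : ℝ := (d:ℝ) with hδ
  set A : ℝ := qT/δ with hA
  set Bq : ℝ := 1 - (1-1/δ)*qT with hBq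
  set C : ℝ := qB/δ with hC
  set Eq : ℝ := 1 - (1-1/δ)*qB with hEq
  have hδ2 : (2:ℝ) ≤ δ := by rw [hδ]; exact_mod_cast hd
  have h1δ : 0 < 1/δ := by positivity
  have hhalf : 1/δ ≤ 1/2 := by
    rw [div_le_div_iff₀ hd0 (by norm_num)]; linarith
  have hpos : 0 < 1 - 1/δ := by linarith
  have h1δ1 : 1/δ ≤ 1 := by rw [div_le_one hd0]; linarith
  have hAnn : 0 ≤ A := div_nonneg hT.1 hd0.le
  have hCnn : 0 ≤ C := div_nonneg hB.1 hd0.le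
  have hBnn : 0 ≤ Bq := by
    have : (1-1/δ)*qT ≤ 1*1 := mul_le_mul (by linarith) hT.2 hT.1 zero_le_one
    simp only [hBq]; linarith
  have hEnn : 0 ≤ Eq := by
    have : (1-1/δ)*qB ≤ 1*1 := mul_le_mul (by linarith) hB.2 hB.1 zero_le_one
    simp only [hEq]; linarith
  have hqiff : ((1-1/δ)*qB ≤ (1-1/δ)*qT) ↔ (qB ≤ qT) := by
    constructor
    · intro h
      by_contra hcon
      push_neg at hcon
      have h2 : (1-1/δ)*qT < (1-1/δ)*qB :=
        mul_lt_mul_of_pos_left hcon hpos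
      linarith
    · intro h
      exact mul_le_mul_of_nonneg_left h (by linarith)
  clear_value A Bq C Eq
  -- the weight function
  set wts : (Fin u → Fin m → Fin d) → Fin m → ℕ :=
    fun j l => (Finset.univ.filter fun k => j k l ≠ i0).card with hwts
  have hwle : ∀ j l, wts j l ≤ u := by
    intro j l
    calc (Finset.univ.filter fun k => j k l ≠ i0).card ≤ Finset.univ.card :=
          Finset.card_filter_le _ _
      _ = u := by rw [Finset.card_univ, Fintype.card_fin]
  -- step 1 : the inner product equals Rw
  have claim1 : ∀ (j : Fin u → Fin m → Fin d) (n : Fin m),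
      ∏ k, ∏ l, gR d i0 (if l = n then qT else qB) (j k l)
        = Rw u A Bq C Eq (wts j) n := by
    intro j n
    rw [Finset.prod_comm]
    unfold Rw
    refine Finset.prod_congr rfl fun l _ => ?_
    by_cases h : l = n
    · rw [if_pos h, if_pos h, hA, hBq]
      exact prod_gR hd i0 qT (fun k => j k l)
    · rw [if_neg h, if_neg h, hC, hEq]
      exact prod_gR hd i0 qB (fun k => j k l)
  -- the value function on weights
  set SW : (Fin m → ℕ) → ℝ := fun w =>
    (let W : ℕ := ∑ l, w l
     let ws : ℕ := if qB ≤ qT then Finset.univ.sup w else sInf (Set.range w)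
     A^ws * Bq^(u-ws) * (C^(W-ws) * Eq^((m-1)*u-(W-ws)))) with hSW
  -- step 2 : the sup over n
  have claim2 : ∀ j : Fin u → Fin m → Fin d,
      Finset.univ.sup' hne (fun n => Rw u A Bq C Eq (wts j) n) = SW (wts j) := by
    intro j
    by_cases hq : qB ≤ qT
    · have hBCAE : Bq * C ≤ A * Eq := by
        have key : A * Eq - Bq * C = (qT - qB)/δ := by
          rw [hA, hBq, hC, hEq]
          field_simp
          ring
        have : 0 ≤ (qT - qB)/δ := div_nonneg (by linarith) hd0.le
        linarith
      obtain ⟨ns, -, hns⟩ := Finset.exists_mem_eq_sup Finset.univ hne (wts j)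
      have hsup : Finset.univ.sup' hne (fun n => Rw u A Bq C Eq (wts j) n)
          = Rw u A Bq C Eq (wts j) ns := by
        apply le_antisymm
        · refine Finset.sup'_le hne _ fun n _ => ?_
          refine Rw_le hAnn hBnn hCnn hEnn hBCAE (wts j) (hwle j) n ns ?_
          rw [← hns]
          exact Finset.le_sup (Finset.mem_univ n)
        · exact Finset.le_sup' _ (Finset.mem_univ ns)
      rw [hsup, Rw_eq A Bq C Eq (wts j) (hwle j) ns]
      simp only [hSW, if_pos hq, ← hns]
    · have hAEBC : A * Eq ≤ Bq * C := by
        have key : Bq * C - A * Eq = (qB - qT)/δ := by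
          rw [hA, hBq, hC, hEq]
          field_simp
          ring
        have : 0 ≤ (qB - qT)/δ := div_nonneg (by linarith) hd0.le
        linarith
      have hrange : (Set.range (wts j)).Nonempty := Set.range_nonempty _
      obtain ⟨ns, hns⟩ := Nat.sInf_mem hrange
      have hsup : Finset.univ.sup' hne (fun n => Rw u A Bq C Eq (wts j) n)
          = Rw u A Bq C Eq (wts j) ns := by
        apply le_antisymm
        · refine Finset.sup'_le hne _ fun n _ => ?_
          refine Rw_le' hAnn hBnn hCnn hEnn hAEBC (wts j) (hwle j) n ns ?_
          rw [hns]
          exact Nat.sInf_le ⟨n, rfl⟩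
        · exact Finset.le_sup' _ (Finset.mem_univ ns)
      rw [hsup, Rw_eq A Bq C Eq (wts j) (hwle j) ns]
      simp only [hSW, if_neg hq, hns]
  -- step 3: rewrite the summands
  have step1 : ∀ j : Fin u → Fin m → Fin d,
      Finset.univ.sup' hne
        (fun n => (1/(m:ℝ)) * ∏ k, ∏ l, gR d i0 (if l = n then qT else qB) (j k l))
      = (1/(m:ℝ)) * SW (wts j) := by
    intro j
    have e1 : (fun n => (1/(m:ℝ)) * ∏ k, ∏ l, gR d i0 (if l = n then qT else qB) (j k l))
        = fun n => (1/(m:ℝ)) * Rw u A Bq C Eq (wts j) n := by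
      funext n; rw [claim1]
    rw [e1, const_mul_sup' _ hne _ (by positivity), claim2]
  rw [Finset.sum_congr rfl (fun j _ => step1 j), ← Finset.mul_sum]
  congr 1
  -- step 4: group by fibers
  set Φ : (Fin u → Fin m → Fin d) → (Fin m → Fin u → Bool) :=
    fun j l k => decide (j k l ≠ i0) with hΦ
  have hwtsΦ : ∀ j, wts j = fun l => hamming (Φ j l) := by
    intro j
    funext l
    simp only [hwts, hΦ, hamming]
    congr 1
    apply Finset.filter_congr
    intro k _
    simp
  have hfib := Finset.sum_fiberwise' Finset.univ Φ
    (fun x => SW (fun l => hamming (x l)))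
  calc ∑ j : Fin u → Fin m → Fin d, SW (wts j)
      = ∑ j : Fin u → Fin m → Fin d, SW (fun l => hamming (Φ j l)) := by
        exact Finset.sum_congr rfl fun j _ => by rw [hwtsΦ j]
    _ = ∑ x : Fin m → Fin u → Bool, ∑ _j ∈ Finset.univ.filter (fun j => Φ j = x),
          SW (fun l => hamming (x l)) := hfib.symm
    _ = ∑ x : Fin m → Fin u → Bool, ((d-1)^(∑ l, hamming (x l)) : ℕ)
          * SW (fun l => hamming (x l)) := by
        refine Finset.sum_congr rfl fun x _ => ?_
        rw [Finset.sum_const, nsmul_eq_mul]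
        congr 1
        rw [← fiber_card hd i0 x]
    _ = _ := by
        refine Finset.sum_congr rfl fun x _ => ?_
        dsimp only
        -- final algebra
        set w : Fin m → ℕ := fun l => hamming (x l) with hw
        set W : ℕ := ∑ l, w l with hWdef
        have hiteq : (if (1-1/δ)*qB ≤ (1-1/δ)*qT then Finset.univ.sup w
            else sInf (Set.range w)) = (if qB ≤ qT then Finset.univ.sup w
            else sInf (Set.range w)) := by
          by_cases hq : qB ≤ qT
          · rw [if_pos (hqiff.mpr hq), if_pos hq]
          · rw [if_neg (fun h => hq (hqiff.mp h)), if_neg hq]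
        rw [hiteq]
        set ws : ℕ := if qB ≤ qT then Finset.univ.sup w else sInf (Set.range w) with hws
        have hwsW : ws ≤ W := by
          rw [hws]
          split
          · obtain ⟨ns, -, hns⟩ := Finset.exists_mem_eq_sup Finset.univ hne w
            rw [hns, hWdef]
            exact Finset.single_le_sum (fun i _ => Nat.zero_le _) (Finset.mem_univ ns)
          · obtain ⟨ns, hns⟩ := Nat.sInf_mem (Set.range_nonempty w)
            rw [← hns, hWdef]
            exact Finset.single_le_sum (fun i _ => Nat.zero_le _) (Finset.mem_univ ns)
        have hcast : ((d-1 : ℕ) : ℝ) = δ - 1 := by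
          rw [hδ]
          push_cast [Nat.cast_sub (by omega : 1 ≤ d)]
          ring
        have eT : (1-1/δ)*qT = (δ-1)*A := by
          rw [hA]
          field_simp
        have eB : (1-1/δ)*qB = (δ-1)*C := by
          rw [hC]
          field_simp
        have e1T : 1-(1-1/δ)*qT = Bq := by rw [hBq]
        have e1B : 1-(1-1/δ)*qB = Eq := by rw [hEq]
        have hpow : ((d-1:ℕ):ℝ)^W = (δ-1)^ws * (δ-1)^(W-ws) := by
          rw [hcast, ← pow_add]
          congr 1
          omega
        rw [eT, eB]
        have hSWw : SW w = A^ws * Bq^(u-ws) * (C^(W-ws) * Eq^((m-1)*u-(W-ws))) := rfl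
        rw [hSWw, Nat.cast_pow, hcast,
          show (δ-1)^W = (δ-1)^ws * (δ-1)^(W-ws) from by rw [← pow_add]; congr 1; omega,
          mul_pow, mul_pow]
        ring


/-- Helstrom limit for channel position finding with depolarizing channels and
pure unentangled inputs. -/
theorem helstrom_CPF_depolarizing_unentangled (d : ℕ) (hd : 2 ≤ d)
    (φ : Matrix (Fin d) (Fin d) ℂ)
    (hherm : φᴴ = φ) (hproj : φ * φ = φ) (htr : φ.trace = 1)
    (m : ℕ) (hm : 2 ≤ m) (qB qT : ℝ)
    (hB : qB ∈ Set.Icc (0:ℝ) 1) (hT : qT ∈ Set.Icc (0:ℝ) 1)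
    (u : ℕ) (hu : 1 ≤ u) :
    helstrom (fun n : Fin m => tensorPow (tensorFam (fun k =>
        if k = n then
          (qT:ℂ) • ((1/(d:ℂ)) • (1 : Matrix (Fin d) (Fin d) ℂ)) + (((1-qT : ℝ)):ℂ) • φ
        else
          (qB:ℂ) • ((1/(d:ℂ)) • (1 : Matrix (Fin d) (Fin d) ℂ)) + (((1-qB : ℝ)):ℂ) • φ)) u)
      (fun _ => 1/(m:ℝ))
      = hErr m u ((1 - 1/(d:ℝ)) * qB) ((1 - 1/(d:ℝ)) * qT) := by
  have hd0 : 0 < d := by omega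
  haveI : NeZero d := ⟨by omega⟩
  have hm0 : 0 < m := by omega
  haveI : NeZero m := ⟨by omega⟩
  obtain ⟨U, i0, hU1, hU2, hφ⟩ := proj_spectral φ hherm hproj htr
  -- each single-system state is U * diagonal * Uᴴ
  have key : ∀ c : ℝ,
      (c:ℂ) • ((1/(d:ℂ)) • (1 : Matrix (Fin d) (Fin d) ℂ)) + (((1-c : ℝ)):ℂ) • φ
      = U * Matrix.diagonal (fun i => ((gR d i0 c i : ℝ) : ℂ)) * Uᴴ := by
    intro c
    have hdiag : Matrix.diagonal (fun i => ((gR d i0 c i : ℝ) : ℂ))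
        = (c:ℂ) • ((1/(d:ℂ)) • (1 : Matrix (Fin d) (Fin d) ℂ))
          + (((1-c : ℝ)):ℂ) • Matrix.diagonal (fun i => if i = i0 then (1:ℂ) else 0) := by
      funext i j
      by_cases h : i = j
      · subst h
        simp only [Matrix.diagonal_apply_eq, Matrix.add_apply, Matrix.smul_apply,
          Matrix.one_apply_eq, smul_eq_mul]
        by_cases h2 : i = i0
        · simp only [gR, if_pos h2]
          push_cast
          ring
        · simp only [gR, if_neg h2]
          push_cast
          ring
      · simp [Matrix.diagonal_apply_ne _ h, Matrix.one_apply_ne h]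
    rw [hdiag, Matrix.mul_add, Matrix.add_mul]
    congr 1
    · simp only [Matrix.mul_smul, Matrix.smul_mul, Matrix.mul_one, hU2]
    · simp only [Matrix.mul_smul, Matrix.smul_mul]
      rw [← hφ]
  -- rewrite the family of states
  have hstate : ∀ n : Fin m, (fun k => if k = n then
        (qT:ℂ) • ((1/(d:ℂ)) • (1 : Matrix (Fin d) (Fin d) ℂ)) + (((1-qT : ℝ)):ℂ) • φ
      else
        (qB:ℂ) • ((1/(d:ℂ)) • (1 : Matrix (Fin d) (Fin d) ℂ)) + (((1-qB : ℝ)):ℂ) • φ)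
      = fun k => U * Matrix.diagonal
          (fun i => ((gR d i0 (if k = n then qT else qB) i : ℝ) : ℂ)) * Uᴴ := by
    intro n
    funext k
    by_cases h : k = n
    · rw [if_pos h, if_pos h, key qT]
    · rw [if_neg h, if_neg h, key qB]
  set Um : Matrix (Fin m → Fin d) (Fin m → Fin d) ℂ := tensorFam (fun _ => U) with hUm
  have hUmH : Umᴴ = tensorFam (fun _ : Fin m => Uᴴ) := by
    rw [hUm, tensorFam_conjTranspose]
  have hUm1 : Umᴴ * Um = 1 := by
    rw [hUmH, hUm, ← tensorFam_mul]
    rw [show (fun k : Fin m => Uᴴ * U) = fun _ : Fin m => (1 : Matrix (Fin d) (Fin d) ℂ) from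
      funext fun _ => hU1]
    exact tensorFam_one
  have hUm2 : Um * Umᴴ = 1 := by
    rw [hUmH, hUm, ← tensorFam_mul]
    rw [show (fun k : Fin m => U * Uᴴ) = fun _ : Fin m => (1 : Matrix (Fin d) (Fin d) ℂ) from
      funext fun _ => hU2]
    exact tensorFam_one
  set V : Matrix (Fin u → Fin m → Fin d) (Fin u → Fin m → Fin d) ℂ :=
    tensorFam (fun _ => Um) with hV
  have hVH : Vᴴ = tensorFam (fun _ : Fin u => Umᴴ) := by
    rw [hV, tensorFam_conjTranspose]
  have hV1 : Vᴴ * V = 1 := by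
    rw [hVH, hV, ← tensorFam_mul]
    rw [show (fun k : Fin u => Umᴴ * Um)
        = fun _ : Fin u => (1 : Matrix (Fin m → Fin d) (Fin m → Fin d) ℂ) from
      funext fun _ => hUm1]
    exact tensorFam_one
  have hV2 : V * Vᴴ = 1 := by
    rw [hVH, hV, ← tensorFam_mul]
    rw [show (fun k : Fin u => Um * Umᴴ)
        = fun _ : Fin u => (1 : Matrix (Fin m → Fin d) (Fin m → Fin d) ℂ) from
      funext fun _ => hUm2]
    exact tensorFam_one
  -- the states are V * diagonal * Vᴴ
  have hρ : ∀ n : Fin m, tensorPow (tensorFam (fun k => if k = n then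
        (qT:ℂ) • ((1/(d:ℂ)) • (1 : Matrix (Fin d) (Fin d) ℂ)) + (((1-qT : ℝ)):ℂ) • φ
      else
        (qB:ℂ) • ((1/(d:ℂ)) • (1 : Matrix (Fin d) (Fin d) ℂ)) + (((1-qB : ℝ)):ℂ) • φ)) u
      = V * Matrix.diagonal (fun j : Fin u → Fin m → Fin d =>
          ((∏ k, ∏ l, gR d i0 (if l = n then qT else qB) (j k l) : ℝ) : ℂ)) * Vᴴ := by
    intro n
    rw [hstate n]
    have e1 : tensorFam (fun k => U * Matrix.diagonal
          (fun i => ((gR d i0 (if k = n then qT else qB) i : ℝ) : ℂ)) * Uᴴ)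
        = Um * Matrix.diagonal (fun v : Fin m → Fin d =>
            ∏ l, ((gR d i0 (if l = n then qT else qB) (v l) : ℝ) : ℂ)) * Umᴴ := by
      rw [tensorFam_mul (fun k => U * Matrix.diagonal
            (fun i => ((gR d i0 (if k = n then qT else qB) i : ℝ) : ℂ))) (fun _ => Uᴴ),
          tensorFam_mul (fun _ => U) (fun k => Matrix.diagonal
            (fun i => ((gR d i0 (if k = n then qT else qB) i : ℝ) : ℂ))),
          tensorFam_diagonal
            (fun k i => ((gR d i0 (if k = n then qT else qB) i : ℝ) : ℂ)),
          ← hUm, ← hUmH]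
    rw [e1]
    have e2 : tensorPow (Um * Matrix.diagonal (fun v : Fin m → Fin d =>
            ∏ l, ((gR d i0 (if l = n then qT else qB) (v l) : ℝ) : ℂ)) * Umᴴ) u
        = V * Matrix.diagonal (fun j : Fin u → Fin m → Fin d =>
            ∏ k, ∏ l, ((gR d i0 (if l = n then qT else qB) (j k l) : ℝ) : ℂ)) * Vᴴ := by
      show tensorFam (fun _ : Fin u => Um * Matrix.diagonal (fun v : Fin m → Fin d =>
            ∏ l, ((gR d i0 (if l = n then qT else qB) (v l) : ℝ) : ℂ)) * Umᴴ) = _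
      rw [tensorFam_mul (fun _ : Fin u => Um * Matrix.diagonal (fun v : Fin m → Fin d =>
              ∏ l, ((gR d i0 (if l = n then qT else qB) (v l) : ℝ) : ℂ))) (fun _ => Umᴴ),
          tensorFam_mul (fun _ : Fin u => Um) (fun _ : Fin u => Matrix.diagonal
            (fun v : Fin m → Fin d =>
              ∏ l, ((gR d i0 (if l = n then qT else qB) (v l) : ℝ) : ℂ))),
          tensorFam_diagonal (fun (_ : Fin u) (v : Fin m → Fin d) =>
              ∏ l, ((gR d i0 (if l = n then qT else qB) (v l) : ℝ) : ℂ)),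
          ← hV, ← hVH]
    rw [e2]
    congr 2
    funext j
    push_cast
    rfl
  rw [show (fun n : Fin m => tensorPow (tensorFam (fun k => if k = n then
        (qT:ℂ) • ((1/(d:ℂ)) • (1 : Matrix (Fin d) (Fin d) ℂ)) + (((1-qT : ℝ)):ℂ) • φ
      else
        (qB:ℂ) • ((1/(d:ℂ)) • (1 : Matrix (Fin d) (Fin d) ℂ)) + (((1-qB : ℝ)):ℂ) • φ)) u)
      = fun n : Fin m => V * Matrix.diagonal (fun j : Fin u → Fin m → Fin d =>
          ((∏ k, ∏ l, gR d i0 (if l = n then qT else qB) (j k l) : ℝ) : ℂ)) * Vᴴ from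
    funext fun n => hρ n]
  rw [helstrom_conj V hV1 hV2]
  have hundo : (fun n : Fin m => Vᴴ * (V * Matrix.diagonal
        (fun j : Fin u → Fin m → Fin d =>
          ((∏ k, ∏ l, gR d i0 (if l = n then qT else qB) (j k l) : ℝ) : ℂ)) * Vᴴ) * V)
      = fun n : Fin m => Matrix.diagonal (fun j : Fin u → Fin m → Fin d =>
          ((∏ k, ∏ l, gR d i0 (if l = n then qT else qB) (j k l) : ℝ) : ℂ)) := by
    funext n
    set X := Matrix.diagonal (fun j : Fin u → Fin m → Fin d =>
          ((∏ k, ∏ l, gR d i0 (if l = n then qT else qB) (j k l) : ℝ) : ℂ))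
    calc Vᴴ * (V * X * Vᴴ) * V = (Vᴴ * V) * X * (Vᴴ * V) := by noncomm_ring
      _ = X := by rw [hV1, Matrix.one_mul, Matrix.mul_one]
  rw [hundo]
  rw [helstrom_diagonal hm0
    (fun n (j : Fin u → Fin m → Fin d) => ∏ k, ∏ l, gR d i0 (if l = n then qT else qB) (j k l))
    (fun n j => Finset.prod_nonneg fun k _ => Finset.prod_nonneg fun l _ => by
      by_cases h : l = n
      · rw [if_pos h]; exact gR_nonneg hd i0 hT.1 hT.2 _
      · rw [if_neg h]; exact gR_nonneg hd i0 hB.1 hB.2 _)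
    (fun _ => 1/(m:ℝ)) (fun _ => by positivity)]
  rw [master d hd i0 m u qB qT hB hT (Finset.univ_nonempty_iff.mpr ⟨⟨0, hm0⟩⟩)]
  unfold hErr
  norm_num
end
end
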